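/- arXiv:2502.01650 — 3 statements merged into one kernel-verified Lean document; each statement's English description precedes it below -/
import Mathlib

section
/- If s is a universally convergent basic sequence on the edgeless cube Q_L and f is the terminal labelling obtained by applying s to the identity labelling, then f is a bijection from the set of cells to itself, and f(C) = C for every cell cluster C. The same holds for the edged cube Q̄_L. -/
universe u v

namespace InfRubik

/-- The three axes of the cube. -/
inductive Axis : Type
  | x | y | z
  deriving DecidableEq

/-- The six colors of the Rubik's cube.  A *configuration* is a map from cells to
`Option Color`, where `none` plays the role of the non-color `NaC`. -/
inductive Color : Type
  | red | white | green | orange | yellow | blue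
  deriving DecidableEq

/-- The set `L̄† = -L ∪ {0} ∪ L ∪ {±∞}` of extended coordinates. -/
inductive ExtCoord (L : Type u) : Type u
  | neg : L → ExtCoord L
  | zero : ExtCoord L
  | pos : L → ExtCoord L
  | negInf : ExtCoord L
  | posInf : ExtCoord L

namespace ExtCoord

variable {L : Type u}

/-- The reflection `r ↦ -r`. -/
def reflect : ExtCoord L → ExtCoord L
  | .neg r => .pos r
  | .zero => .zero
  | .pos r => .neg r
  | .negInf => .posInf
  | .posInf => .negInf

@[simp] theorem reflect_reflect (a : ExtCoord L) : a.reflect.reflect = a := by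
  cases a <;> rfl

/-- Whether a coordinate is `±∞`. -/
def isInfB : ExtCoord L → Bool
  | .negInf => true
  | .posInf => true
  | _ => false

@[simp] theorem isInfB_reflect (a : ExtCoord L) : a.reflect.isInfB = a.isInfB := by
  cases a <;> rfl

/-- Whether a coordinate is `0`. -/
def isZeroB : ExtCoord L → Bool
  | .zero => true
  | _ => false

@[simp] theorem isZeroB_reflect (a : ExtCoord L) : a.reflect.isZeroB = a.isZeroB := by
  cases a <;> rfl

end ExtCoord

/-- A point of the ambient space `L̄† × L̄† × L̄†`. -/
abbrev Triple (L : Type u) := ExtCoord L × ExtCoord L × ExtCoord L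

/-- The coordinate of a point along an axis. -/
def Triple.coord {L : Type u} : Axis → Triple L → ExtCoord L
  | .x, p => p.1
  | .y, p => p.2.1
  | .z, p => p.2.2

/-- Quarter-turn rotation of the ambient space about an axis (right-hand rule). -/
def rot {L : Type u} : Axis → Triple L → Triple L
  | .x, p => (p.1, p.2.2.reflect, p.2.1)
  | .y, p => (p.2.2, p.2.1, p.1.reflect)
  | .z, p => (p.2.1.reflect, p.1, p.2.2)

/-- Inverse quarter-turn rotation of the ambient space about an axis. -/
def rotInv {L : Type u} : Axis → Triple L → Triple L
  | .x, p => (p.1, p.2.2, p.2.1.reflect)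
  | .y, p => (p.2.2.reflect, p.2.1, p.1)
  | .z, p => (p.2.1, p.1.reflect, p.2.2)

@[simp] theorem rotInv_rot {L : Type u} (i : Axis) (p : Triple L) : rotInv i (rot i p) = p := by
  cases i <;> simp [rot, rotInv]

@[simp] theorem rot_rotInv {L : Type u} (i : Axis) (p : Triple L) : rot i (rotInv i p) = p := by
  cases i <;> simp [rot, rotInv]

/-- The number of infinite coordinates of a point. -/
def infCount {L : Type u} (p : Triple L) : ℕ :=
  (if p.1.isInfB then 1 else 0) + (if p.2.1.isInfB then 1 else 0) +
    (if p.2.2.isInfB then 1 else 0)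

/-- The number of zero coordinates of a point. -/
def zeroCount {L : Type u} (p : Triple L) : ℕ :=
  (if p.1.isZeroB then 1 else 0) + (if p.2.1.isZeroB then 1 else 0) +
    (if p.2.2.isZeroB then 1 else 0)

theorem infCount_rot {L : Type u} (i : Axis) (p : Triple L) : infCount (rot i p) = infCount p := by
  obtain ⟨a, b, c⟩ := p
  cases i <;> cases a <;> cases b <;> cases c <;> rfl

theorem infCount_rotInv {L : Type u} (i : Axis) (p : Triple L) :
    infCount (rotInv i p) = infCount p := by
  obtain ⟨a, b, c⟩ := p
  cases i <;> cases a <;> cases b <;> cases c <;> rfl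

@[simp] theorem coord_rot_self {L : Type u} (i : Axis) (p : Triple L) :
    (rot i p).coord i = p.coord i := by
  cases i <;> rfl

@[simp] theorem coord_rotInv_self {L : Type u} (i : Axis) (p : Triple L) :
    (rotInv i p).coord i = p.coord i := by
  cases i <;> rfl

/-- A cell of the *edgeless* cube `Q_L`: a point of the ambient space with exactly one
infinite coordinate. -/
def Cell (L : Type u) : Type u := {p : Triple L // infCount p = 1}

open Classical in
/-- The underlying map on points of the quarter-turn twist `T_{i,α}`. -/
noncomputable def qtTriple {L : Type u} (i : Axis) (α : ExtCoord L) (p : Triple L) : Triple L :=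
  if p.coord i = α then rot i p else p

open Classical in
/-- The underlying map on points of the inverse quarter-turn twist `T_{i,α}⁻¹`. -/
noncomputable def qtTripleInv {L : Type u} (i : Axis) (α : ExtCoord L) (p : Triple L) : Triple L :=
  if p.coord i = α then rotInv i p else p

theorem qtTripleInv_qtTriple {L : Type u} (i : Axis) (α : ExtCoord L) (p : Triple L) :
    qtTripleInv i α (qtTriple i α p) = p := by
  classical
  by_cases h : p.coord i = α <;> simp [qtTriple, qtTripleInv, h]

theorem qtTriple_qtTripleInv {L : Type u} (i : Axis) (α : ExtCoord L) (p : Triple L) :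
    qtTriple i α (qtTripleInv i α p) = p := by
  classical
  by_cases h : p.coord i = α <;> simp [qtTriple, qtTripleInv, h]

theorem infCount_qtTriple {L : Type u} (i : Axis) (α : ExtCoord L) (p : Triple L) :
    infCount (qtTriple i α p) = infCount p := by
  classical
  by_cases h : p.coord i = α <;> simp [qtTriple, h, infCount_rot]

theorem infCount_qtTripleInv {L : Type u} (i : Axis) (α : ExtCoord L) (p : Triple L) :
    infCount (qtTripleInv i α p) = infCount p := by
  classical
  by_cases h : p.coord i = α <;> simp [qtTripleInv, h, infCount_rotInv]

/-- The quarter-turn twist `T_{i,α}` of the edgeless cube, as a permutation of cells. -/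
noncomputable def quarterTurn {L : Type u} (i : Axis) (α : ExtCoord L) : Equiv.Perm (Cell L) where
  toFun c := ⟨qtTriple i α c.1, by rw [infCount_qtTriple]; exact c.2⟩
  invFun c := ⟨qtTripleInv i α c.1, by rw [infCount_qtTripleInv]; exact c.2⟩
  left_inv c := Subtype.ext (qtTripleInv_qtTriple i α c.1)
  right_inv c := Subtype.ext (qtTriple_qtTripleInv i α c.1)

/-- The basic twists of the edgeless cube: quarter turns, half turns and reverse
quarter turns of a single layer. -/
def IsBasic (L : Type u) (π : Equiv.Perm (Cell L)) : Prop :=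
  ∃ (i : Axis) (α : ExtCoord L),
    π = quarterTurn i α ∨ π = quarterTurn i α ^ 2 ∨ π = (quarterTurn i α)⁻¹

/-! ### The edged cube -/

/-- How a quarter-turn about axis `i` transports the face tag of a cell. -/
def tagMap : Axis → Axis → Axis
  | .x, .x => .x
  | .x, .y => .z
  | .x, .z => .y
  | .y, .x => .z
  | .y, .y => .y
  | .y, .z => .x
  | .z, .x => .y
  | .z, .y => .x
  | .z, .z => .z

@[simp] theorem tagMap_tagMap (i j : Axis) : tagMap i (tagMap i j) = j := by
  cases i <;> cases j <;> rfl

theorem isInfB_coord_tagMap_rot {L : Type u} (i j : Axis) (p : Triple L) :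
    ((rot i p).coord (tagMap i j)).isInfB = (p.coord j).isInfB := by
  cases i <;> cases j <;> simp [rot, Triple.coord, tagMap]

theorem isInfB_coord_tagMap_rotInv {L : Type u} (i j : Axis) (p : Triple L) :
    ((rotInv i p).coord (tagMap i j)).isInfB = (p.coord j).isInfB := by
  cases i <;> cases j <;> simp [rotInv, Triple.coord, tagMap]

/-- A cell of the *edged* cube `Q̄_L`: a point of the ambient space together with a tag
naming an axis, such that the coordinate along the tagged axis is infinite (the tag
indicates the face to which the cell belongs). -/
def ECell (L : Type u) : Type u := {q : Triple L × Axis // (q.1.coord q.2).isInfB = true}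

open Classical in
/-- The underlying map of the quarter-turn twist `T_{i,α}` of the edged cube. -/
noncomputable def eqtFun {L : Type u} (i : Axis) (α : ExtCoord L) (q : Triple L × Axis) :
    Triple L × Axis :=
  if q.1.coord i = α then (rot i q.1, tagMap i q.2) else q

open Classical in
/-- The underlying map of the reverse quarter-turn twist of the edged cube. -/
noncomputable def eqtFunInv {L : Type u} (i : Axis) (α : ExtCoord L) (q : Triple L × Axis) :
    Triple L × Axis :=
  if q.1.coord i = α then (rotInv i q.1, tagMap i q.2) else q

theorem eqtFunInv_eqtFun {L : Type u} (i : Axis) (α : ExtCoord L) (q : Triple L × Axis) :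
    eqtFunInv i α (eqtFun i α q) = q := by
  classical
  by_cases h : q.1.coord i = α <;> simp [eqtFun, eqtFunInv, h]

theorem eqtFun_eqtFunInv {L : Type u} (i : Axis) (α : ExtCoord L) (q : Triple L × Axis) :
    eqtFun i α (eqtFunInv i α q) = q := by
  classical
  by_cases h : q.1.coord i = α <;> simp [eqtFun, eqtFunInv, h]

theorem isInfB_eqtFun {L : Type u} (i : Axis) (α : ExtCoord L) (q : Triple L × Axis) :
    (((eqtFun i α q).1.coord (eqtFun i α q).2)).isInfB = ((q.1.coord q.2)).isInfB := by
  classical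
  by_cases h : q.1.coord i = α <;> simp [eqtFun, h, isInfB_coord_tagMap_rot]

theorem isInfB_eqtFunInv {L : Type u} (i : Axis) (α : ExtCoord L) (q : Triple L × Axis) :
    (((eqtFunInv i α q).1.coord (eqtFunInv i α q).2)).isInfB = ((q.1.coord q.2)).isInfB := by
  classical
  by_cases h : q.1.coord i = α <;> simp [eqtFunInv, h, isInfB_coord_tagMap_rotInv]

/-- The quarter-turn twist `T_{i,α}` of the edged cube, as a permutation of cells.  A face
twist moves, besides the cells of its face, also the coupled edge and corner cells of the
adjacent faces lying in the twisted layer. -/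
noncomputable def equarterTurn {L : Type u} (i : Axis) (α : ExtCoord L) :
    Equiv.Perm (ECell L) where
  toFun c := ⟨eqtFun i α c.1, by rw [isInfB_eqtFun]; exact c.2⟩
  invFun c := ⟨eqtFunInv i α c.1, by rw [isInfB_eqtFunInv]; exact c.2⟩
  left_inv c := Subtype.ext (eqtFunInv_eqtFun i α c.1)
  right_inv c := Subtype.ext (eqtFun_eqtFunInv i α c.1)

/-- The basic twists of the edged cube. -/
def IsEBasic (L : Type u) (π : Equiv.Perm (ECell L)) : Prop :=
  ∃ (i : Axis) (α : ExtCoord L),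
    π = equarterTurn i α ∨ π = equarterTurn i α ^ 2 ∨ π = (equarterTurn i α)⁻¹

/-! ### Transfinite sequences of twists and their action on labellings -/

open Classical in
/-- The eventual value of an ordinal-indexed family of `Option`-values: `some v` if the family
stabilizes on `some v` before `lam`, and `none` otherwise. -/
noncomputable def eventualVal {X : Type u} (lam : Ordinal.{v})
    (g : ∀ η, η < lam → Option X) : Option X :=
  if h : ∃ v : X, ∃ γ, γ < lam ∧ ∀ η (hη : η < lam), γ ≤ η → g η hη = some v
  then some h.choose else none

/-- Applying an ordinal-indexed sequence of permutations to an initial labelling: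
`run σ f0 θ` is the labelling obtained after the first `θ` moves, with
`f_{η+1}(c) = f_η(σ_η⁻¹ c)` at successors and the eventual value (or `NaC = none`)
at limits. -/
noncomputable def run {Cl : Type v} {X : Type u} (σ : Ordinal.{v} → Equiv.Perm Cl)
    (f0 : Cl → Option X) (θ : Ordinal.{v}) : Cl → Option X :=
  Ordinal.limitRecOn (motive := fun _ => Cl → Option X) θ f0
    (fun η fη c => fη ((σ η)⁻¹ c))
    (fun lam _ prev c => eventualVal lam (fun η h => prev η h c))

/-- A (transfinite) sequence of twists of length `len`, each of which satisfies the
predicate `B` (being a basic twist). -/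
structure TwistSeq (Cl : Type v) (B : Equiv.Perm Cl → Prop) : Type (v + 1) where
  len : Ordinal.{v}
  seq : Ordinal.{v} → Equiv.Perm Cl
  basic : ∀ η, η < len → B (seq η)

namespace TwistSeq

variable {Cl : Type v} {B : Equiv.Perm Cl → Prop}

/-- The terminal labelling obtained by applying a sequence of twists to `f0`. -/
noncomputable def terminal (s : TwistSeq Cl B) {X : Type u} (f0 : Cl → Option X) :
    Cl → Option X :=
  run s.seq f0 s.len

/-- A sequence of twists is convergent over `f0` if the terminal labelling is legal,
i.e. never takes the value `NaC = none`. -/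
def ConvOver (s : TwistSeq Cl B) {X : Type u} (f0 : Cl → Option X) : Prop :=
  ∀ c, s.terminal f0 c ≠ none

/-- A sequence of twists is universally convergent if it is convergent over the identity
labelling. -/
def UnivConv (s : TwistSeq Cl B) : Prop := s.ConvOver (fun c => some c)

/-- A sequence is twist-finite if each twist occurs in it only finitely many times. -/
def TwistFinite (s : TwistSeq Cl B) : Prop :=
  ∀ π : Equiv.Perm Cl, {η : Ordinal | η < s.len ∧ s.seq η = π}.Finite

/-- Two sequences are equivalent, `σ⃗ ∼ τ⃗`, when they produce the same terminal
configuration over every initial configuration. -/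
def Sim (s t : TwistSeq Cl B) : Prop :=
  ∀ f : Cl → Option Color, s.terminal f = t.terminal f

/-- Concatenation of twist sequences: `s.concat t` performs `s` and then `t`. -/
noncomputable def concat (s t : TwistSeq Cl B) : TwistSeq Cl B where
  len := s.len + t.len
  seq := fun η => if η < s.len then s.seq η else t.seq (η - s.len)
  basic := by
    intro η hη
    by_cases h : η < s.len
    · simpa [h] using s.basic η h
    · have hc : 0 < t.len := by
        rcases eq_zero_or_pos t.len with h0 | h0
        · rw [h0, add_zero] at hη; exact absurd hη h
        · exact h0
      have h2 : η - s.len < t.len := Ordinal.sub_lt_of_lt_add hη hc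
      simpa [h] using t.basic _ h2

/-- The empty sequence of twists. -/
def empty (Cl : Type v) (B : Equiv.Perm Cl → Prop) : TwistSeq Cl B where
  len := 0
  seq := fun _ => 1
  basic := fun η hη => absurd hη (by simp)

/-- `n`-fold self-concatenation of a sequence of twists. -/
noncomputable def npow (s : TwistSeq Cl B) : ℕ → TwistSeq Cl B
  | 0 => empty Cl B
  | n + 1 => (npow s n).concat s

end TwistSeq

/-- Basic sequences of twists of the edgeless cube `Q_L`. -/
abbrev BasicSeq (L : Type u) := TwistSeq (Cell L) (IsBasic L)

/-- Basic sequences of twists of the edged cube `Q̄_L`. -/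
abbrev EBasicSeq (L : Type u) := TwistSeq (ECell L) (IsEBasic L)

/-- `f` is accessible from `f0` when some basic sequence applied to `f0` is convergent with
terminal configuration `f`. -/
def Accessible {Cl : Type v} (B : Equiv.Perm Cl → Prop) (f0 f : Cl → Option Color) : Prop :=
  ∃ s : TwistSeq Cl B, s.ConvOver f0 ∧ s.terminal f0 = f

/-- A labelling is legal if it never takes the value `NaC = none`. -/
def IsLegal {Cl : Type v} {X : Type u} (f : Cl → Option X) : Prop := ∀ c, f c ≠ none

/-! ### Clusters, faces, and distinguished configurations -/

/-- The group of permutations of cells of the edgeless cube generated by the basic twists. -/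
def twistGroup (L : Type u) : Subgroup (Equiv.Perm (Cell L)) :=
  Subgroup.closure {π | IsBasic L π}

/-- The cluster of a cell of the edgeless cube: its orbit under the group generated by the
basic twists. -/
def cluster {L : Type u} (c : Cell L) : Set (Cell L) :=
  {d | ∃ g ∈ twistGroup L, g c = d}

/-- The group of permutations of cells of the edged cube generated by the basic twists. -/
def etwistGroup (L : Type u) : Subgroup (Equiv.Perm (ECell L)) :=
  Subgroup.closure {π | IsEBasic L π}

/-- The cluster of a cell of the edged cube. -/
def ecluster {L : Type u} (c : ECell L) : Set (ECell L) :=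
  {d | ∃ g ∈ etwistGroup L, g c = d}

open Classical in
/-- The solved configuration of the edgeless cube: each face gets one of six distinct
colors. -/
noncomputable def fSolved (L : Type u) : Cell L → Option Color := fun c =>
  if c.1.1 = ExtCoord.posInf then some .red
  else if c.1.1 = ExtCoord.negInf then some .orange
  else if c.1.2.1 = ExtCoord.posInf then some .blue
  else if c.1.2.1 = ExtCoord.negInf then some .green
  else if c.1.2.2 = ExtCoord.posInf then some .white
  else some .yellow

/-- The color of each face: the face is named by the axis and the sign (`true` = `+∞`). -/
def faceColor : Axis → Bool → Color
  | .x, true => .red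
  | .x, false => .orange
  | .y, true => .blue
  | .y, false => .green
  | .z, true => .white
  | .z, false => .yellow

open Classical in
/-- The solved configuration of the edged cube. -/
noncomputable def efSolved (L : Type u) : ECell L → Option Color := fun c =>
  if c.1.1.coord c.1.2 = ExtCoord.posInf then some (faceColor c.1.2 true)
  else some (faceColor c.1.2 false)

/-- A center cell of the edgeless cube: two of its coordinates are `0`. -/
def IsCenter {L : Type u} (c : Cell L) : Prop := zeroCount c.1 = 2

/-- The global rotation of the whole cube about an axis, as a permutation of the cells of
the edgeless cube. -/
def rotAllPerm {L : Type u} (i : Axis) : Equiv.Perm (Cell L) where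
  toFun c := ⟨rot i c.1, by rw [infCount_rot]; exact c.2⟩
  invFun c := ⟨rotInv i c.1, by rw [infCount_rotInv]; exact c.2⟩
  left_inv c := Subtype.ext (rotInv_rot i c.1)
  right_inv c := Subtype.ext (rot_rotInv i c.1)

/-- The group of global rotations of the edgeless cube. -/
def rotGroup (L : Type u) : Subgroup (Equiv.Perm (Cell L)) :=
  Subgroup.closure (Set.range (rotAllPerm (L := L)))

/-- A configuration of the edgeless cube is standard if every non-center cluster contains
exactly four cells of each of the six colors, and its restriction to the center cluster is
obtained from the solved configuration by a global rotation of the cube. -/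
def Standard {L : Type u} (f : Cell L → Option Color) : Prop :=
  (∀ c : Cell L, ¬IsCenter c → ∀ γ : Color, {d ∈ cluster c | f d = some γ}.ncard = 4) ∧
  ∃ g ∈ rotGroup L, ∀ d : Cell L, IsCenter d → f d = fSolved L (g⁻¹ d)

/-- A configuration is invariant under all quarter-turn face twists. -/
def FaceInvariant {L : Type u} (f : Cell L → Option Color) : Prop :=
  ∀ (i : Axis) (α : ExtCoord L), α.isInfB = true →
    ∀ c : Cell L, f ((quarterTurn i α)⁻¹ c) = f c

/-! ### Quadrants and cluster configurations -/

/-- The upper-right quadrant `D` of the Front face: the cells `(x, y, +∞)` with `x ∈ L`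
and `y ∈ {0} ∪ L`; every non-center cluster has a unique representative in `D`. -/
def Dset (L : Type u) : Set (Cell L) :=
  {c | ∃ (a : L) (b : ExtCoord L), (b = ExtCoord.zero ∨ ∃ r : L, b = ExtCoord.pos r) ∧
    c.1 = (ExtCoord.pos a, b, ExtCoord.posInf)}

/-- Two cells lie in the same face quadrant (an image of `D` under a global rotation). -/
def SameQuadrant {L : Type u} (d d' : Cell L) : Prop :=
  ∃ g ∈ rotGroup L, d ∈ (fun c => g c) '' Dset L ∧ d' ∈ (fun c => g c) '' Dset L

/-! ### Coupled cells of the edged cube -/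

/-- Two cells of the edged cube are coupled if they occupy the same location but belong to
different faces (they are parts of a common edge or corner cubie). -/
def Coupled {L : Type u} (c c' : ECell L) : Prop := c.1.1 = c'.1.1 ∧ c.1.2 ≠ c'.1.2

/-- An edge cell: exactly two infinite coordinates. -/
def IsEdgeCell {L : Type u} (c : ECell L) : Prop := infCount c.1.1 = 2

/-- A corner cell: three infinite coordinates. -/
def IsCornerCell {L : Type u} (c : ECell L) : Prop := infCount c.1.1 = 3

/-- An edge-cross cell: an edge cell one of whose coordinates is `0`. -/
def IsEdgeCross {L : Type u} (c : ECell L) : Prop :=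
  IsEdgeCell c ∧ 0 < zeroCount c.1.1

end InfRubik

namespace InfRubikAux
open InfRubik

variable {Cl : Type v} {B : Equiv.Perm Cl → Prop}

/-- generic orbit -/
def orbB (B : Equiv.Perm Cl → Prop) (c : Cl) : Set Cl :=
  {d | ∃ g ∈ Subgroup.closure {π | B π}, g c = d}

theorem mem_orbB_self (c : Cl) : c ∈ orbB B c := ⟨1, one_mem _, rfl⟩

theorem orbB_eq_of_mem {c d : Cl} (h : d ∈ orbB B c) : orbB B d = orbB B c := by
  obtain ⟨g, hg, rfl⟩ := h
  ext e
  constructor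
  · rintro ⟨h, hh, rfl⟩; exact ⟨h * g, mul_mem hh hg, rfl⟩
  · rintro ⟨h, hh, rfl⟩
    exact ⟨h * g⁻¹, mul_mem hh (inv_mem hg), by simp [Equiv.Perm.mul_apply]⟩

theorem inv_basic_mem_orbB {π : Equiv.Perm Cl} (hπ : B π) (c : Cl) :
    π⁻¹ c ∈ orbB B c :=
  ⟨π⁻¹, inv_mem (Subgroup.subset_closure hπ), rfl⟩

theorem run_zero (σ : Ordinal.{v} → Equiv.Perm Cl) {X : Type u} (f0 : Cl → Option X) :
    run σ f0 0 = f0 := Ordinal.limitRecOn_zero _ _ _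

theorem run_succ (σ : Ordinal.{v} → Equiv.Perm Cl) {X : Type u} (f0 : Cl → Option X)
    (η : Ordinal.{v}) :
    run σ f0 (Order.succ η) = fun c => run σ f0 η ((σ η)⁻¹ c) :=
  Ordinal.limitRecOn_succ _ _ _ _

theorem run_limit (σ : Ordinal.{v} → Equiv.Perm Cl) {X : Type u} (f0 : Cl → Option X)
    {lam : Ordinal.{v}} (h : Order.IsSuccLimit lam) :
    run σ f0 lam = fun c => eventualVal lam (fun η _ => run σ f0 η c) :=
  Ordinal.limitRecOn_limit _ _ _ _ h

theorem eventualVal_eq_some {X : Type u} {lam : Ordinal.{v}}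
    {g : ∀ η, η < lam → Option X} {d : X} (h : eventualVal lam g = some d) :
    ∃ γ, γ < lam ∧ ∀ η (hη : η < lam), γ ≤ η → g η hη = some d := by
  classical
  unfold eventualVal at h
  split at h
  · rename_i hex
    obtain ⟨γ, hγ, hspec⟩ := hex.choose_spec
    obtain rfl : hex.choose = d := Option.some_injective _ h
    exact ⟨γ, hγ, hspec⟩
  · exact absurd h (by simp)

/-- the double invariant -/
theorem run_inv (s : TwistSeq Cl B) (θ : Ordinal.{v}) : θ ≤ s.len →
    (∀ c d : Cl, run s.seq (fun a => some a) θ c = some d → d ∈ orbB B c) ∧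
    (∀ c c' d : Cl, run s.seq (fun a => some a) θ c = some d →
        run s.seq (fun a => some a) θ c' = some d → c = c') := by
  induction θ using Ordinal.limitRecOn with
  | zero =>
    intro _
    rw [run_zero]
    constructor
    · intro c d h
      obtain rfl : c = d := Option.some_injective _ h
      exact mem_orbB_self c
    · intro c c' d h h'
      obtain rfl : c = d := Option.some_injective _ h
      exact (Option.some_injective _ h').symm
  | add_one η ih =>
    intro hθ
    rw [Ordinal.add_one_eq_succ] at hθ ⊢
    have hη : η < s.len := lt_of_lt_of_le (Order.lt_succ η) hθ
    obtain ⟨ih1, ih2⟩ := ih hη.le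
    rw [run_succ]
    constructor
    · intro c d h
      have hm : (s.seq η)⁻¹ c ∈ orbB B c := by
        rcases s.basic η hη with hb
        exact inv_basic_mem_orbB hb c
      have := ih1 _ _ h
      rwa [orbB_eq_of_mem hm] at this
    · intro c c' d h h'
      have := ih2 _ _ _ h h'
      exact (s.seq η)⁻¹.injective this
  | limit lam hlim ih =>
    intro hθ
    rw [run_limit _ _ hlim]
    constructor
    · intro c d h
      obtain ⟨γ, hγ, hspec⟩ := eventualVal_eq_some h
      exact (ih γ hγ (hγ.le.trans hθ)).1 c d (hspec γ hγ le_rfl)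
    · intro c c' d h h'
      obtain ⟨γ, hγ, hspec⟩ := eventualVal_eq_some h
      obtain ⟨γ', hγ', hspec'⟩ := eventualVal_eq_some h'
      have hm : max γ γ' < lam := max_lt hγ hγ'
      exact (ih _ hm (hm.le.trans hθ)).2 c c' d
        (hspec _ hm (le_max_left _ _)) (hspec' _ hm (le_max_right _ _))

/-- the generic main lemma -/
theorem main (hfin : ∀ c : Cl, (orbB B c).Finite)
    (s : TwistSeq Cl B) (hs : s.UnivConv) :
    ∃ e : Cl → Cl, Function.Bijective e ∧
      (∀ c, s.terminal (fun a => some a) c = some (e c)) ∧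
      (∀ c, e '' orbB B c = orbB B c) := by
  have hsome : ∀ c, (s.terminal (fun a : Cl => some a) c).isSome := by
    intro c
    have := hs c
    cases h : s.terminal (fun a : Cl => some a) c with
    | none => exact absurd h this
    | some d => rfl
  set e : Cl → Cl := fun c => (s.terminal (fun a : Cl => some a) c).get (hsome c) with he
  have hterm : ∀ c, s.terminal (fun a : Cl => some a) c = some (e c) := fun c =>
    (Option.some_get (hsome c)).symm
  obtain ⟨inv1, inv2⟩ := run_inv s s.len le_rfl
  have hterm' : ∀ c, run s.seq (fun a => some a) s.len c = some (e c) := hterm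
  have hmem : ∀ c, e c ∈ orbB B c := fun c => inv1 c (e c) (hterm' c)
  have hinj : Function.Injective e := by
    intro c c' h
    exact inv2 c c' (e c) (hterm' c) (by rw [hterm' c', h])
  have himg : ∀ c, e '' orbB B c = orbB B c := by
    intro c
    have hmt : Set.MapsTo e (orbB B c) (orbB B c) := by
      intro d hd
      have := hmem d
      rwa [orbB_eq_of_mem hd] at this
    have := ((hfin c).injOn_iff_bijOn_of_mapsTo hmt).mp hinj.injOn
    exact this.image_eq
  refine ⟨e, ⟨hinj, ?_⟩, hterm, himg⟩
  intro d
  have : d ∈ e '' orbB B d := (himg d).symm ▸ mem_orbB_self d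
  obtain ⟨c, _, hc⟩ := this
  exact ⟨c, hc⟩

instance : Finite Axis :=
  Finite.of_injective (fun a => match a with | .x => (0 : Fin 3) | .y => 1 | .z => 2)
    (by intro a b h; cases a <;> cases b <;> first | rfl | exact absurd h (by decide))

theorem iff_image_of_perm {S : Set Cl} {π : Equiv.Perm Cl}
    (h1 : ∀ d ∈ S, π d ∈ S) (h2 : ∀ d ∈ S, π⁻¹ d ∈ S) : ∀ d, d ∈ S ↔ π d ∈ S := by
  intro d
  constructor
  · exact h1 d
  · intro h
    have := h2 _ h
    rwa [show π⁻¹ (π d) = d from π.symm_apply_apply d] at this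

theorem iff_sq {S : Set Cl} {π : Equiv.Perm Cl}
    (h : ∀ d, d ∈ S ↔ π d ∈ S) : ∀ d, d ∈ S ↔ (π ^ 2) d ∈ S := by
  intro d
  have : (π ^ 2) d = π (π d) := by
    rw [pow_two]; rfl
  rw [this, ← h (π d), ← h d]

theorem iff_inv {S : Set Cl} {π : Equiv.Perm Cl}
    (h : ∀ d, d ∈ S ↔ π d ∈ S) : ∀ d, d ∈ S ↔ π⁻¹ d ∈ S := by
  intro d
  have := h (π⁻¹ d)
  rw [show π (π⁻¹ d) = d from π.apply_symm_apply d] at this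
  exact this.symm

theorem orbB_subset_of_invariant {S : Set Cl}
    (hgen : ∀ π, B π → ∀ d, d ∈ S ↔ π d ∈ S) {c : Cl} (hc : c ∈ S) :
    orbB B c ⊆ S := by
  rintro d ⟨g, hg, rfl⟩
  have hQ : ∀ x ∈ Subgroup.closure {π | B π}, ∀ d, d ∈ S ↔ x d ∈ S := by
    intro x hx
    induction hx using Subgroup.closure_induction with
    | mem π hπ => exact hgen π hπ
    | one => simp
    | mul x y hx hy ihx ihy =>
      intro d
      have : (x * y) d = x (y d) := rfl
      rw [this, ← ihx (y d), ← ihy d]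
    | inv x hx ihx =>
      intro d
      have := ihx (x⁻¹ d)
      rw [show x (x⁻¹ d) = d from x.apply_symm_apply d] at this
      exact this.symm
  exact (hQ g hg c).mp hc

section Fin

variable {L : Type u}

theorem orbB_cell_finite (c : Cell L) : (orbB (IsBasic L) c).Finite := by
  classical
  set A : Set (ExtCoord L) :=
    {c.1.1, c.1.1.reflect, c.1.2.1, c.1.2.1.reflect, c.1.2.2, c.1.2.2.reflect} with hAdef
  have hA : A.Finite := by
    apply Set.Finite.insert; apply Set.Finite.insert; apply Set.Finite.insert
    apply Set.Finite.insert; apply Set.Finite.insert; exact Set.finite_singleton _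
  have hAr : ∀ a ∈ A, ExtCoord.reflect a ∈ A := by
    intro a ha
    simp only [hAdef, Set.mem_insert_iff, Set.mem_singleton_iff] at ha ⊢
    rcases ha with rfl | rfl | rfl | rfl | rfl | rfl <;> simp [ExtCoord.reflect_reflect]
  set T : Set (Triple L) := {p | p.1 ∈ A ∧ p.2.1 ∈ A ∧ p.2.2 ∈ A} with hTdef
  have hTfin : T.Finite := by
    apply Set.Finite.subset (hA.prod (hA.prod hA))
    rintro p ⟨h1, h2, h3⟩
    exact ⟨h1, h2, h3⟩
  have hrot : ∀ (i : Axis) (p : Triple L), p ∈ T → rot i p ∈ T := by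
    rintro i p ⟨h1, h2, h3⟩
    cases i
    · exact ⟨h1, hAr _ h3, h2⟩
    · exact ⟨h3, h2, hAr _ h1⟩
    · exact ⟨hAr _ h2, h1, h3⟩
  have hrotInv : ∀ (i : Axis) (p : Triple L), p ∈ T → rotInv i p ∈ T := by
    rintro i p ⟨h1, h2, h3⟩
    cases i
    · exact ⟨h1, h3, hAr _ h2⟩
    · exact ⟨hAr _ h3, h2, h1⟩
    · exact ⟨h2, hAr _ h1, h3⟩
  set S : Set (Cell L) := {d | d.1 ∈ T} with hSdef
  have hSfin : S.Finite := hTfin.preimage Subtype.val_injective.injOn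
  have hqtS : ∀ (i : Axis) (α : ExtCoord L) (d : Cell L), d ∈ S ↔ quarterTurn i α d ∈ S := by
    intro i α
    apply iff_image_of_perm
    · intro d hd
      show qtTriple i α d.1 ∈ T
      unfold qtTriple
      split
      · exact hrot _ _ hd
      · exact hd
    · intro d hd
      show qtTripleInv i α d.1 ∈ T
      unfold qtTripleInv
      split
      · exact hrotInv _ _ hd
      · exact hd
  have hgen : ∀ π, IsBasic L π → ∀ d, d ∈ S ↔ π d ∈ S := by
    rintro π ⟨i, α, rfl | rfl | rfl⟩
    · exact hqtS i α
    · exact iff_sq (hqtS i α)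
    · exact iff_inv (hqtS i α)
  have hc : c ∈ S := ⟨by simp [hAdef], by simp [hAdef], by simp [hAdef]⟩
  exact hSfin.subset (orbB_subset_of_invariant hgen hc)

theorem orbB_ecell_finite (c : ECell L) : (orbB (IsEBasic L) c).Finite := by
  classical
  set A : Set (ExtCoord L) :=
    {c.1.1.1, c.1.1.1.reflect, c.1.1.2.1, c.1.1.2.1.reflect, c.1.1.2.2,
      c.1.1.2.2.reflect} with hAdef
  have hA : A.Finite := by
    apply Set.Finite.insert; apply Set.Finite.insert; apply Set.Finite.insert
    apply Set.Finite.insert; apply Set.Finite.insert; exact Set.finite_singleton _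
  have hAr : ∀ a ∈ A, ExtCoord.reflect a ∈ A := by
    intro a ha
    simp only [hAdef, Set.mem_insert_iff, Set.mem_singleton_iff] at ha ⊢
    rcases ha with rfl | rfl | rfl | rfl | rfl | rfl <;> simp [ExtCoord.reflect_reflect]
  set T : Set (Triple L) := {p | p.1 ∈ A ∧ p.2.1 ∈ A ∧ p.2.2 ∈ A} with hTdef
  have hTfin : T.Finite := by
    apply Set.Finite.subset (hA.prod (hA.prod hA))
    rintro p ⟨h1, h2, h3⟩
    exact ⟨h1, h2, h3⟩
  have hrot : ∀ (i : Axis) (p : Triple L), p ∈ T → rot i p ∈ T := by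
    rintro i p ⟨h1, h2, h3⟩
    cases i
    · exact ⟨h1, hAr _ h3, h2⟩
    · exact ⟨h3, h2, hAr _ h1⟩
    · exact ⟨hAr _ h2, h1, h3⟩
  have hrotInv : ∀ (i : Axis) (p : Triple L), p ∈ T → rotInv i p ∈ T := by
    rintro i p ⟨h1, h2, h3⟩
    cases i
    · exact ⟨h1, h3, hAr _ h2⟩
    · exact ⟨hAr _ h3, h2, h1⟩
    · exact ⟨h2, hAr _ h1, h3⟩
  set S : Set (ECell L) := {d | d.1.1 ∈ T} with hSdef
  have hSfin : S.Finite := by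
    have h1 : ((T ×ˢ (Set.univ : Set Axis)) : Set (Triple L × Axis)).Finite :=
      hTfin.prod Set.finite_univ
    exact (h1.preimage (Subtype.val_injective (p := fun q : Triple L × Axis =>
      (q.1.coord q.2).isInfB = true)).injOn).subset (fun d hd => ⟨hd, trivial⟩)
  have hqtS : ∀ (i : Axis) (α : ExtCoord L) (d : ECell L), d ∈ S ↔ equarterTurn i α d ∈ S := by
    intro i α
    apply iff_image_of_perm
    · intro d hd
      show (eqtFun i α d.1).1 ∈ T
      unfold eqtFun
      split
      · exact hrot _ _ hd
      · exact hd
    · intro d hd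
      show (eqtFunInv i α d.1).1 ∈ T
      unfold eqtFunInv
      split
      · exact hrotInv _ _ hd
      · exact hd
  have hgen : ∀ π, IsEBasic L π → ∀ d, d ∈ S ↔ π d ∈ S := by
    rintro π ⟨i, α, rfl | rfl | rfl⟩
    · exact hqtS i α
    · exact iff_sq (hqtS i α)
    · exact iff_inv (hqtS i α)
  have hc : c ∈ S := ⟨by simp [hAdef], by simp [hAdef], by simp [hAdef]⟩
  exact hSfin.subset (orbB_subset_of_invariant hgen hc)

end Fin

end InfRubikAux


open InfRubik in
/-- A universally convergent basic sequence applied to the identity labelling yields a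
bijection of the set of cells fixing every cluster setwise; the same holds for the edged
cube. -/
theorem univConv_bijective_clusters {L : Type u} [Infinite L] :
    (∀ s : BasicSeq L, s.UnivConv →
      ∃ e : Cell L → Cell L, Function.Bijective e ∧
        (∀ c, s.terminal (fun a => some a) c = some (e c)) ∧
        (∀ c, e '' cluster c = cluster c)) ∧
    (∀ s : EBasicSeq L, s.UnivConv →
      ∃ e : ECell L → ECell L, Function.Bijective e ∧
        (∀ c, s.terminal (fun a => some a) c = some (e c)) ∧
        (∀ c, e '' ecluster c = ecluster c)) := by
  constructor
  · intro s hs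
    exact InfRubikAux.main (fun c => InfRubikAux.orbB_cell_finite c) s hs
  · intro s hs
    exact InfRubikAux.main (fun c => InfRubikAux.orbB_ecell_finite c) s hs
end

section
/- A basic sequence on the edgeless cube Q_L is universally convergent if and only if it is twist-finite. The same equivalence holds for the edged cube Q̄_L. -/
universe u v

/-! ### Auxiliary lemmas for the main theorem -/

namespace InfRubik

instance : Fintype Axis :=
  ⟨{Axis.x, Axis.y, Axis.z}, fun a => by cases a <;> simp⟩

section RunLemmas

universe w x

variable {Cl : Type w}

theorem run_zero {X : Type x} (σ : Ordinal.{w} → Equiv.Perm Cl) (f0 : Cl → Option X) :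
    run σ f0 0 = f0 :=
  Ordinal.limitRecOn_zero _ _ _

theorem run_succ {X : Type x} (σ : Ordinal.{w} → Equiv.Perm Cl) (f0 : Cl → Option X)
    (η : Ordinal.{w}) :
    run σ f0 (Order.succ η) = fun c => run σ f0 η ((σ η)⁻¹ c) :=
  Ordinal.limitRecOn_succ _ _ _ _

theorem run_limit {X : Type x} (σ : Ordinal.{w} → Equiv.Perm Cl) (f0 : Cl → Option X)
    (lam : Ordinal.{w}) (h : Order.IsSuccLimit lam) :
    run σ f0 lam = fun c => eventualVal lam (fun η _ => run σ f0 η c) :=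
  Ordinal.limitRecOn_limit _ _ _ _ h

theorem eventualVal_eq_some {X : Type x} {lam : Ordinal.{w}} {g : ∀ η, η < lam → Option X}
    {v : X} {γ : Ordinal.{w}} (hγ : γ < lam)
    (h : ∀ η (hη : η < lam), γ ≤ η → g η hη = some v) :
    eventualVal lam g = some v := by
  have hex : ∃ v : X, ∃ δ, δ < lam ∧ ∀ η (hη : η < lam), δ ≤ η → g η hη = some v := ⟨v, γ, hγ, h⟩
  rw [eventualVal, dif_pos hex]
  obtain ⟨δ, hδ, hh⟩ := hex.choose_spec
  have hm : max γ δ < lam := max_lt hγ hδ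
  have h1 := h _ hm (le_max_left _ _)
  have h2 := hh _ hm (le_max_right _ _)
  rw [h1] at h2
  exact h2.symm

theorem exists_of_eventualVal_eq_some {X : Type x} {lam : Ordinal.{w}}
    {g : ∀ η, η < lam → Option X} {v : X} (h : eventualVal lam g = some v) :
    ∃ γ, γ < lam ∧ ∀ η (hη : η < lam), γ ≤ η → g η hη = some v := by
  rw [eventualVal] at h
  split at h
  · next hex =>
    obtain ⟨δ, hδ, hh⟩ := hex.choose_spec
    have : hex.choose = v := by injection h
    rw [this] at hh
    exact ⟨δ, hδ, hh⟩
  · exact absurd h (by simp)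

theorem perm_inv_fix {σ : Equiv.Perm Cl} {c : Cl} (h : σ c = c) : σ⁻¹ c = c := by
  conv_lhs => rw [← h]
  exact σ.symm_apply_apply c

theorem run_stab (σ : Ordinal.{w} → Equiv.Perm Cl) (Θ : Ordinal.{w})
    (H : ∀ c : Cl, {η | η < Θ ∧ σ η c ≠ c}.Finite) :
    ∀ θ, θ ≤ Θ → ∀ c : Cl,
      (∃ d, run σ (fun c => some c) θ c = some d) ∧
      (∀ γ, γ ≤ θ → (∀ η, γ ≤ η → η < θ → σ η c = c) →
        run σ (fun c => some c) θ c = run σ (fun c => some c) γ c) := by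
  intro θ
  induction θ using Ordinal.induction with
  | h θ IH =>
  intro hθΘ c
  rcases Ordinal.zero_or_succ_or_isSuccLimit θ with rfl | ⟨κ, rfl⟩ | hlim
  · refine ⟨⟨c, by rw [run_zero]⟩, ?_⟩
    intro γ hγ _
    have h0 : γ = 0 := le_antisymm hγ (zero_le : (0 : Ordinal) ≤ γ)
    rw [h0]
  · have hκθ : κ < Order.succ κ := Order.lt_succ κ
    have hκΘ : κ ≤ Θ := le_of_lt (lt_of_lt_of_le hκθ hθΘ)
    constructor
    · obtain ⟨d, hd⟩ := (IH κ hκθ hκΘ ((σ κ)⁻¹ c)).1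
      exact ⟨d, by rw [run_succ]; exact hd⟩
    · intro γ hγ hno
      rcases eq_or_lt_of_le hγ with rfl | hγκ
      · rfl
      · have hγκ' : γ ≤ κ := Order.lt_succ_iff.mp hγκ
        have hfix : (σ κ)⁻¹ c = c := perm_inv_fix (hno κ hγκ' hκθ)
        have hs : run σ (fun c => some c) (Order.succ κ) c
            = run σ (fun c => some c) κ c := by
          simp only [run_succ]; rw [hfix]
        rw [hs]
        exact (IH κ hκθ hκΘ c).2 γ hγκ' (fun η h1 h2 => hno η h1 (lt_trans h2 hκθ))
  · have hE : ({η | η < Θ ∧ σ η c ≠ c} ∩ Set.Iio θ).Finite := (H c).inter_of_left _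
    obtain ⟨γ0, hγ0θ, hγ0no⟩ : ∃ γ0, γ0 < θ ∧ ∀ η, γ0 ≤ η → η < θ → σ η c = c := by
      rcases Set.eq_empty_or_nonempty ({η | η < Θ ∧ σ η c ≠ c} ∩ Set.Iio θ) with he | hne
      · refine ⟨0, hlim.pos, fun η h1 h2 => ?_⟩
        by_contra hcon
        exact Set.eq_empty_iff_forall_notMem.mp he η ⟨⟨lt_of_lt_of_le h2 hθΘ, hcon⟩, h2⟩
      · have hmem := hne.csSup_mem hE
        refine ⟨Order.succ (sSup ({η | η < Θ ∧ σ η c ≠ c} ∩ Set.Iio θ)),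
          hlim.succ_lt hmem.2, fun η h1 h2 => ?_⟩
        by_contra hcon
        have hle : η ≤ sSup ({η | η < Θ ∧ σ η c ≠ c} ∩ Set.Iio θ) :=
          le_csSup hE.bddAbove ⟨⟨lt_of_lt_of_le h2 hθΘ, hcon⟩, h2⟩
        exact absurd (h1.trans hle) (Order.lt_succ _).not_ge
    have hkey : ∀ η, γ0 ≤ η → η < θ →
        run σ (fun c => some c) η c = run σ (fun c => some c) γ0 c := by
      intro η h1 h2
      exact (IH η h2 (le_of_lt (lt_of_lt_of_le h2 hθΘ)) c).2 γ0 h1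
        (fun μ hm1 hm2 => hγ0no μ hm1 (lt_trans hm2 h2))
    obtain ⟨d, hd⟩ := (IH γ0 hγ0θ (le_of_lt (lt_of_lt_of_le hγ0θ hθΘ)) c).1
    have hθval : run σ (fun c => some c) θ c = some d := by
      rw [run_limit σ _ θ hlim]
      exact eventualVal_eq_some hγ0θ (fun η hη h1 => by rw [hkey η h1 hη, hd])
    refine ⟨⟨d, hθval⟩, ?_⟩
    intro γ hγ hno
    rcases eq_or_lt_of_le hγ with rfl | hγθ
    · rfl
    · have hmax : max γ γ0 < θ := max_lt hγθ hγ0θ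
      have e1 : run σ (fun c => some c) (max γ γ0) c = run σ (fun c => some c) γ0 c :=
        hkey _ (le_max_right _ _) hmax
      have e2 : run σ (fun c => some c) (max γ γ0) c = run σ (fun c => some c) γ c :=
        (IH _ hmax (le_of_lt (lt_of_lt_of_le hmax hθΘ)) c).2 γ (le_max_left _ _)
          (fun μ h1 h2 => hno μ h1 (lt_trans h2 hmax))
      rw [hθval, ← hd, ← e1, e2]

theorem run_inj (σ : Ordinal.{w} → Equiv.Perm Cl) :
    ∀ (θ : Ordinal.{w}) (c₁ c₂ d : Cl),
      run σ (fun c => some c) θ c₁ = some d → run σ (fun c => some c) θ c₂ = some d →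
      c₁ = c₂ := by
  intro θ
  induction θ using Ordinal.induction with
  | h θ IH =>
  intro c₁ c₂ d h1 h2
  rcases Ordinal.zero_or_succ_or_isSuccLimit θ with rfl | ⟨κ, rfl⟩ | hlim
  · simp only [run_zero, Option.some.injEq] at h1 h2
    rw [h1, h2]
  · simp only [run_succ] at h1 h2
    have := IH κ (Order.lt_succ κ) _ _ d h1 h2
    exact (Equiv.injective _) this
  · simp only [run_limit σ _ θ hlim] at h1 h2
    obtain ⟨γ1, hγ1, hh1⟩ := exists_of_eventualVal_eq_some h1
    obtain ⟨γ2, hγ2, hh2⟩ := exists_of_eventualVal_eq_some h2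
    have hm : max γ1 γ2 < θ := max_lt hγ1 hγ2
    exact IH _ hm c₁ c₂ d (hh1 _ hm (le_max_left _ _)) (hh2 _ hm (le_max_right _ _))

end RunLemmas

section Generic

universe w

variable {Cl : Type w}

theorem generic_iff {B : Equiv.Perm Cl → Prop}
    (H1 : ∀ c : Cl, ∃ F : Set (Equiv.Perm Cl), F.Finite ∧ ∀ π, B π → π c ≠ c → π ∈ F)
    (H2 : ∀ π, B π → ∃ c : Cl, π c ≠ c)
    (H3 : ∀ c : Cl, ∃ S : Set Cl, S.Finite ∧ c ∈ S ∧
      ∀ π, B π → ∀ d ∈ S, π d ∈ S ∧ π⁻¹ d ∈ S)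
    (s : TwistSeq Cl B) : s.UnivConv ↔ s.TwistFinite := by
  constructor
  · -- universally convergent → twist-finite
    intro hUC
    by_contra hTF
    have hUC' : ∀ x : Cl, run s.seq (fun c => some c) s.len x ≠ none := hUC
    simp only [TwistSeq.TwistFinite, not_forall] at hTF
    obtain ⟨π₀, hπ₀⟩ := hTF
    have hwf := Ordinal.lt_wf.{w}.has_min
      {θ : Ordinal.{w} | ∃ π : Equiv.Perm Cl, {η | η < θ ∧ s.seq η = π}.Infinite}
      ⟨s.len, π₀, hπ₀⟩
    obtain ⟨lam, hlamBad, hlammin⟩ := hwf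
    have hlamlen : lam ≤ s.len := le_of_not_gt (hlammin s.len ⟨π₀, hπ₀⟩)
    have hmin : ∀ θ, θ < lam → ∀ π : Equiv.Perm Cl, {η | η < θ ∧ s.seq η = π}.Finite := by
      intro θ hθ π
      by_contra hf
      exact hlammin θ ⟨π, hf⟩ hθ
    obtain ⟨π, hπinf⟩ := hlamBad
    have hlim : Order.IsSuccLimit lam := by
      rw [Ordinal.isSuccLimit_iff, Order.isSuccPrelimit_iff_succ_lt]
      refine ⟨?_, ?_⟩
      · intro h0
        refine hπinf (Set.Finite.subset (Set.finite_empty) ?_)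
        rintro η ⟨h, -⟩
        rw [h0] at h
        exact absurd h (zero_le : (0 : Ordinal) ≤ η).not_gt
      · intro a ha
        rcases lt_or_eq_of_le (Order.succ_le_of_lt ha) with h | h
        · exact h
        · exfalso
          have hsub : {η | η < Order.succ a ∧ s.seq η = π}
              ⊆ insert a {η | η < a ∧ s.seq η = π} := by
            rintro η ⟨h1, h2⟩
            rcases lt_or_eq_of_le (Order.lt_succ_iff.mp h1) with h3 | h3
            · exact Set.mem_insert_of_mem _ ⟨h3, h2⟩
            · rw [h3]; exact Set.mem_insert _ _
          have hfin : {η | η < Order.succ a ∧ s.seq η = π}.Finite :=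
            Set.Finite.subset ((hmin a ha π).insert a) hsub
          rw [h] at hfin
          exact hπinf hfin
    have hcof : ∀ γ, γ < lam → ∃ η, γ ≤ η ∧ η < lam ∧ s.seq η = π := by
      intro γ hγ
      by_contra hn
      push_neg at hn
      refine hπinf (Set.Finite.subset (hmin γ hγ π) ?_)
      rintro η ⟨h1, h2⟩
      exact ⟨lt_of_not_ge fun h3 => hn η h3 h1 h2, h2⟩
    have hπB : B π := by
      obtain ⟨η₀, hη₀⟩ := hπinf.nonempty
      have hb := s.basic η₀ (lt_of_lt_of_le hη₀.1 hlamlen)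
      rwa [hη₀.2] at hb
    obtain ⟨c, hc⟩ := H2 π hπB
    have hnone : run s.seq (fun c => some c) lam c = none := by
      by_contra h
      obtain ⟨v, hv⟩ := Option.ne_none_iff_exists'.mp h
      rw [run_limit s.seq _ lam hlim] at hv
      obtain ⟨γ, hγ, hst⟩ := exists_of_eventualVal_eq_some hv
      obtain ⟨η, hγη, hηlam, hseq⟩ := hcof γ hγ
      have hsη : Order.succ η < lam := hlim.succ_lt hηlam
      have h1 : run s.seq (fun c => some c) η c = some v := hst η hηlam hγη
      have h2 : run s.seq (fun c => some c) (Order.succ η) c = some v :=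
        hst _ hsη (le_trans hγη (Order.le_succ η))
      simp only [run_succ] at h2
      rw [hseq] at h2
      have heq := run_inj s.seq η (π⁻¹ c) c v h2 h1
      have h3 := congrArg π heq
      rw [show π (π⁻¹ c) = c from π.apply_symm_apply c] at h3
      exact hc h3.symm
    obtain ⟨S, hSfin, hcS, hScl⟩ := H3 c
    haveI := hSfin.to_subtype
    have hval : ∀ θ, θ ≤ s.len → ∀ c' ∈ S, ∀ d,
        run s.seq (fun c => some c) θ c' = some d → d ∈ S := by
      intro θ
      induction θ using Ordinal.induction with
      | h θ IH =>
      intro hθ c' hc' d hd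
      rcases Ordinal.zero_or_succ_or_isSuccLimit θ with rfl | ⟨κ, rfl⟩ | hlim' 
      · simp only [run_zero, Option.some.injEq] at hd
        rwa [← hd]
      · simp only [run_succ] at hd
        have hκ : κ < s.len := lt_of_lt_of_le (Order.lt_succ κ) hθ
        exact IH κ (Order.lt_succ κ) hκ.le _ ((hScl _ (s.basic κ hκ) c' hc').2) d hd
      · simp only [run_limit s.seq _ θ hlim'] at hd
        obtain ⟨γ, hγ, hst⟩ := exists_of_eventualVal_eq_some hd
        exact IH γ hγ (le_of_lt (lt_of_lt_of_le hγ hθ)) c' hc' d (hst γ hγ le_rfl)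
    have habs : ∀ d : Cl, (∀ c' ∈ S, run s.seq (fun c => some c) lam c' ≠ some d) →
        ∀ θ, lam ≤ θ → θ ≤ s.len → ∀ c' ∈ S,
          run s.seq (fun c => some c) θ c' ≠ some d := by
      intro d h0 θ
      induction θ using Ordinal.induction with
      | h θ IH =>
      intro hlamθ hθ c' hc'
      rcases eq_or_lt_of_le hlamθ with rfl | hlt
      · exact h0 c' hc'
      rcases Ordinal.zero_or_succ_or_isSuccLimit θ with rfl | ⟨κ, rfl⟩ | hlim' 
      · exact absurd hlt (zero_le : (0 : Ordinal) ≤ lam).not_gt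
      · intro hd
        simp only [run_succ] at hd
        have hκlen : κ < s.len := lt_of_lt_of_le (Order.lt_succ κ) hθ
        have hlamκ : lam ≤ κ := Order.lt_succ_iff.mp hlt
        exact IH κ (Order.lt_succ κ) hlamκ hκlen.le _
          ((hScl _ (s.basic κ hκlen) c' hc').2) hd
      · intro hd
        simp only [run_limit s.seq _ θ hlim'] at hd
        obtain ⟨γ, hγ, hst⟩ := exists_of_eventualVal_eq_some hd
        have hm : max γ lam < θ := max_lt hγ hlt
        exact IH _ hm (le_max_right _ _) (le_of_lt (lt_of_lt_of_le hm hθ)) c' hc'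
          (hst _ hm (le_max_left _ _))
    have hmissing : ∃ d ∈ S, ∀ c' ∈ S, run s.seq (fun c => some c) lam c' ≠ some d := by
      by_contra h
      push_neg at h
      choose w hwS hwv using h
      have hWinj : Function.Injective (fun d : S => (⟨w d.1 d.2, hwS d.1 d.2⟩ : S)) := by
        intro d₁ d₂ he
        have hww : w d₁.1 d₁.2 = w d₂.1 d₂.2 := congrArg Subtype.val he
        have h1 := hwv d₁.1 d₁.2
        rw [hww, hwv d₂.1 d₂.2] at h1
        exact Subtype.ext (Option.some_injective _ h1.symm)
      obtain ⟨d, hd⟩ := Finite.injective_iff_surjective.mp hWinj ⟨c, hcS⟩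
      have hveq : run s.seq (fun c => some c) lam c = some d.1 := by
        have hv := hwv d.1 d.2
        rw [show w d.1 d.2 = c from congrArg Subtype.val hd] at hv
        exact hv
      rw [hnone] at hveq
      exact absurd hveq (by simp)
    obtain ⟨d₀, hd₀S, hd₀⟩ := hmissing
    have hu : ∀ c' : S, ∃ d : S, run s.seq (fun c => some c) s.len c'.1 = some d.1 := by
      intro c'
      obtain ⟨d, hd⟩ := Option.ne_none_iff_exists'.mp (hUC' c'.1)
      exact ⟨⟨d, hval s.len le_rfl c'.1 c'.2 d hd⟩, hd⟩
    choose u huv using hu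
    have huinj : Function.Injective u := by
      intro a b he
      have hb := huv b
      rw [← he] at hb
      exact Subtype.ext (run_inj s.seq s.len a.1 b.1 (u a).1 (huv a) hb)
    obtain ⟨c', hc'⟩ := Finite.injective_iff_surjective.mp huinj ⟨d₀, hd₀S⟩
    have : run s.seq (fun c => some c) s.len c'.1 = some d₀ := by
      have hv := huv c'
      rw [hc'] at hv
      exact hv
    exact habs d₀ hd₀ s.len hlamlen le_rfl c'.1 c'.2 this
  · -- twist-finite → universally convergent
    intro hTF
    have Hall : ∀ c : Cl, {η | η < s.len ∧ s.seq η c ≠ c}.Finite := by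
      intro c
      obtain ⟨F, hFfin, hF⟩ := H1 c
      refine Set.Finite.subset (hFfin.biUnion (fun π _ => hTF π)) ?_
      rintro η ⟨h1, h2⟩
      exact Set.mem_biUnion (hF _ (s.basic η h1) h2) ⟨h1, rfl⟩
    intro c
    obtain ⟨d, hd⟩ := (run_stab s.seq s.len Hall s.len le_rfl c).1
    show run s.seq (fun c => some c) s.len c ≠ none
    rw [hd]
    simp

end Generic
section CubeInstances

variable {L : Type u}

/-! Application lemmas -/

theorem qtTriple_eq_rot {i : Axis} {α : ExtCoord L} {p : Triple L} (h : p.coord i = α) :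
    qtTriple i α p = rot i p := by
  unfold qtTriple; rw [if_pos h]

theorem qtTriple_eq_self {i : Axis} {α : ExtCoord L} {p : Triple L} (h : p.coord i ≠ α) :
    qtTriple i α p = p := by
  unfold qtTriple; rw [if_neg h]

theorem qtTripleInv_eq_rotInv {i : Axis} {α : ExtCoord L} {p : Triple L} (h : p.coord i = α) :
    qtTripleInv i α p = rotInv i p := by
  unfold qtTripleInv; rw [if_pos h]

theorem qtTripleInv_eq_self {i : Axis} {α : ExtCoord L} {p : Triple L} (h : p.coord i ≠ α) :
    qtTripleInv i α p = p := by
  unfold qtTripleInv; rw [if_neg h]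

theorem cval_qt (i : Axis) (α : ExtCoord L) (c : Cell L) :
    (quarterTurn i α c).1 = qtTriple i α c.1 := rfl

theorem cval_qt_inv (i : Axis) (α : ExtCoord L) (c : Cell L) :
    ((quarterTurn i α)⁻¹ c).1 = qtTripleInv i α c.1 := rfl

theorem qt_sq_apply (i : Axis) (α : ExtCoord L) (c : Cell L) :
    (quarterTurn i α ^ 2) c = quarterTurn i α (quarterTurn i α c) := by
  rw [sq, Equiv.Perm.mul_apply]

theorem qt_sq_inv_apply (i : Axis) (α : ExtCoord L) (c : Cell L) :
    (quarterTurn i α ^ 2)⁻¹ c = (quarterTurn i α)⁻¹ ((quarterTurn i α)⁻¹ c) := by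
  rw [sq, mul_inv_rev, Equiv.Perm.mul_apply]

theorem quarterTurn_fix {i : Axis} {α : ExtCoord L} {c : Cell L} (h : c.1.coord i ≠ α) :
    quarterTurn i α c = c :=
  Subtype.ext (by rw [cval_qt, qtTriple_eq_self h])

theorem quarterTurn_inv_fix {i : Axis} {α : ExtCoord L} {c : Cell L} (h : c.1.coord i ≠ α) :
    (quarterTurn i α)⁻¹ c = c :=
  Subtype.ext (by rw [cval_qt_inv, qtTripleInv_eq_self h])

theorem quarterTurn_sq_fix {i : Axis} {α : ExtCoord L} {c : Cell L} (h : c.1.coord i ≠ α) :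
    (quarterTurn i α ^ 2) c = c := by
  rw [qt_sq_apply, quarterTurn_fix h, quarterTurn_fix h]

/-! H1 for the edgeless cube -/

theorem H1_cell (c : Cell L) : ∃ F : Set (Equiv.Perm (Cell L)), F.Finite ∧
    ∀ π, IsBasic L π → π c ≠ c → π ∈ F := by
  classical
  refine ⟨⋃ i : Axis, {quarterTurn i (c.1.coord i), quarterTurn i (c.1.coord i) ^ 2,
      (quarterTurn i (c.1.coord i))⁻¹}, ?_, ?_⟩
  · exact Set.finite_iUnion fun i =>
      (Set.finite_singleton _).insert _ |>.insert _
  · rintro π ⟨i, α, hπ⟩ hmove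
    have hα : c.1.coord i = α := by
      by_contra hne
      rcases hπ with rfl | rfl | rfl
      · exact hmove (quarterTurn_fix hne)
      · exact hmove (quarterTurn_sq_fix hne)
      · exact hmove (quarterTurn_inv_fix hne)
    subst hα
    refine Set.mem_iUnion.mpr ⟨i, ?_⟩
    rcases hπ with rfl | rfl | rfl <;> simp

/-! H2 for the edgeless cube -/

def otherA (α : ExtCoord L) (a : L) : ExtCoord L :=
  if α.isInfB then ExtCoord.pos a else ExtCoord.posInf

def otherB (α : ExtCoord L) (a : L) : ExtCoord L :=
  if α.isInfB then ExtCoord.zero else ExtCoord.pos a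

def probe (i : Axis) (α : ExtCoord L) (a : L) : Triple L :=
  match i with
  | .x => (α, otherA α a, otherB α a)
  | .y => (otherA α a, α, otherB α a)
  | .z => (otherA α a, otherB α a, α)

theorem probe_infCount (i : Axis) (α : ExtCoord L) (a : L) : infCount (probe i α a) = 1 := by
  cases i <;> cases α <;>
    simp [probe, otherA, otherB, infCount, ExtCoord.isInfB]

theorem probe_coord (i : Axis) (α : ExtCoord L) (a : L) : (probe i α a).coord i = α := by
  cases i <;> rfl

theorem probe_rot_ne (i : Axis) (α : ExtCoord L) (a : L) :
    rot i (probe i α a) ≠ probe i α a ∧ rot i (rot i (probe i α a)) ≠ probe i α a := by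
  cases i <;> cases α <;>
    simp [probe, otherA, otherB, rot, ExtCoord.reflect, ExtCoord.isInfB]

theorem H2_cell [Nonempty L] : ∀ π : Equiv.Perm (Cell L), IsBasic L π → ∃ c, π c ≠ c := by
  rintro π ⟨i, α, hπ⟩
  obtain ⟨a⟩ := ‹Nonempty L›
  refine ⟨⟨probe i α a, probe_infCount i α a⟩, ?_⟩
  have h1 : (probe i α a).coord i = α := probe_coord i α a
  have hr := probe_rot_ne i α a
  rcases hπ with rfl | rfl | rfl
  · intro he
    apply hr.1
    have hv : qtTriple i α (probe i α a) = probe i α a := congrArg Subtype.val he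
    rwa [qtTriple_eq_rot h1] at hv
  · intro he
    apply hr.2
    replace he := (qt_sq_apply i α _).symm.trans he
    have hv : qtTriple i α (qtTriple i α (probe i α a)) = probe i α a := congrArg Subtype.val he
    rw [qtTriple_eq_rot h1] at hv
    rwa [qtTriple_eq_rot (by rw [coord_rot_self, h1])] at hv
  · intro he
    apply hr.1
    have hv : qtTripleInv i α (probe i α a) = probe i α a := congrArg Subtype.val he
    rw [qtTripleInv_eq_rotInv h1] at hv
    have hv' : rotInv i (probe i α a) = probe i α a := hv
    conv_lhs => rw [← hv']
    rw [rot_rotInv]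

/-! H3 for the edgeless cube -/

def Vset (p : Triple L) : Set (ExtCoord L) :=
  {v | ∃ j : Axis, v = p.coord j ∨ v = (p.coord j).reflect}

theorem Vset_finite (p : Triple L) : (Vset p).Finite := by
  refine Set.Finite.subset
    (Set.finite_iUnion fun j : Axis => (Set.finite_singleton ((p.coord j).reflect)).insert
      (p.coord j)) ?_
  rintro v ⟨j, h | h⟩ <;> exact Set.mem_iUnion.mpr ⟨j, by simp [h]⟩

theorem Vset_reflect {p : Triple L} {v : ExtCoord L} (h : v ∈ Vset p) :
    v.reflect ∈ Vset p := by
  obtain ⟨j, h | h⟩ := h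
  · exact ⟨j, Or.inr (by rw [h])⟩
  · exact ⟨j, Or.inl (by rw [h, ExtCoord.reflect_reflect])⟩

def inV (p₀ p : Triple L) : Prop := p.1 ∈ Vset p₀ ∧ p.2.1 ∈ Vset p₀ ∧ p.2.2 ∈ Vset p₀

theorem inV_self (p : Triple L) : inV p p :=
  ⟨⟨.x, Or.inl rfl⟩, ⟨.y, Or.inl rfl⟩, ⟨.z, Or.inl rfl⟩⟩

theorem inV_rot {p₀ : Triple L} (i : Axis) {p : Triple L} (h : inV p₀ p) :
    inV p₀ (rot i p) := by
  obtain ⟨h1, h2, h3⟩ := h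
  cases i
  · exact ⟨h1, Vset_reflect h3, h2⟩
  · exact ⟨h3, h2, Vset_reflect h1⟩
  · exact ⟨Vset_reflect h2, h1, h3⟩

theorem inV_rotInv {p₀ : Triple L} (i : Axis) {p : Triple L} (h : inV p₀ p) :
    inV p₀ (rotInv i p) := by
  obtain ⟨h1, h2, h3⟩ := h
  cases i
  · exact ⟨h1, h3, Vset_reflect h2⟩
  · exact ⟨Vset_reflect h3, h2, h1⟩
  · exact ⟨h2, Vset_reflect h1, h3⟩

theorem inV_qt {p₀ : Triple L} {i : Axis} {α : ExtCoord L} {p : Triple L} (h : inV p₀ p) :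
    inV p₀ (qtTriple i α p) := by
  by_cases hc : p.coord i = α
  · rw [qtTriple_eq_rot hc]; exact inV_rot i h
  · rw [qtTriple_eq_self hc]; exact h

theorem inV_qtInv {p₀ : Triple L} {i : Axis} {α : ExtCoord L} {p : Triple L} (h : inV p₀ p) :
    inV p₀ (qtTripleInv i α p) := by
  by_cases hc : p.coord i = α
  · rw [qtTripleInv_eq_rotInv hc]; exact inV_rotInv i h
  · rw [qtTripleInv_eq_self hc]; exact h

theorem inV_set_finite (p₀ : Triple L) : {p : Triple L | inV p₀ p}.Finite := by
  have h : {p : Triple L | inV p₀ p} = (Vset p₀) ×ˢ ((Vset p₀) ×ˢ (Vset p₀)) := by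
    ext p; exact Iff.rfl
  rw [h]
  exact (Vset_finite p₀).prod ((Vset_finite p₀).prod (Vset_finite p₀))

theorem H3_cell (c : Cell L) : ∃ S : Set (Cell L), S.Finite ∧ c ∈ S ∧
    ∀ π, IsBasic L π → ∀ d ∈ S, π d ∈ S ∧ π⁻¹ d ∈ S := by
  refine ⟨{d : Cell L | inV c.1 d.1}, ?_, inV_self c.1, ?_⟩
  · have h : {d : Cell L | inV c.1 d.1}
        = Subtype.val ⁻¹' {p : Triple L | inV c.1 p} := rfl
    rw [h]
    exact (inV_set_finite c.1).preimage (Subtype.val_injective.injOn)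
  · rintro π ⟨i, α, rfl | rfl | rfl⟩ d hd
    · refine ⟨?_, ?_⟩
      · show inV c.1 (quarterTurn i α d).1
        rw [cval_qt]; exact inV_qt hd
      · show inV c.1 ((quarterTurn i α)⁻¹ d).1
        rw [cval_qt_inv]; exact inV_qtInv hd
    · refine ⟨?_, ?_⟩
      · show inV c.1 ((quarterTurn i α ^ 2) d).1
        rw [qt_sq_apply, cval_qt, cval_qt]; exact inV_qt (inV_qt hd)
      · show inV c.1 ((quarterTurn i α ^ 2)⁻¹ d).1
        rw [qt_sq_inv_apply, cval_qt_inv, cval_qt_inv]; exact inV_qtInv (inV_qtInv hd)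
    · refine ⟨?_, ?_⟩
      · show inV c.1 ((quarterTurn i α)⁻¹ d).1
        rw [cval_qt_inv]; exact inV_qtInv hd
      · show inV c.1 ((quarterTurn i α)⁻¹⁻¹ d).1
        rw [inv_inv, cval_qt]; exact inV_qt hd

end CubeInstances
section EdgedInstances

variable {L : Type u}

theorem eqtFun_pos {i : Axis} {α : ExtCoord L} {q : Triple L × Axis} (h : q.1.coord i = α) :
    eqtFun i α q = (rot i q.1, tagMap i q.2) := by
  unfold eqtFun; rw [if_pos h]

theorem eqtFun_neg {i : Axis} {α : ExtCoord L} {q : Triple L × Axis} (h : q.1.coord i ≠ α) :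
    eqtFun i α q = q := by
  unfold eqtFun; rw [if_neg h]

theorem eqtFunInv_pos {i : Axis} {α : ExtCoord L} {q : Triple L × Axis} (h : q.1.coord i = α) :
    eqtFunInv i α q = (rotInv i q.1, tagMap i q.2) := by
  unfold eqtFunInv; rw [if_pos h]

theorem eqtFunInv_neg {i : Axis} {α : ExtCoord L} {q : Triple L × Axis} (h : q.1.coord i ≠ α) :
    eqtFunInv i α q = q := by
  unfold eqtFunInv; rw [if_neg h]


theorem eqtFun_pos' {i : Axis} {α : ExtCoord L} {p : Triple L} {t : Axis}
    (h : p.coord i = α) : eqtFun i α (p, t) = (rot i p, tagMap i t) := eqtFun_pos h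

theorem eqtFunInv_pos' {i : Axis} {α : ExtCoord L} {p : Triple L} {t : Axis}
    (h : p.coord i = α) : eqtFunInv i α (p, t) = (rotInv i p, tagMap i t) := eqtFunInv_pos h

theorem eval_qt (i : Axis) (α : ExtCoord L) (c : ECell L) :
    (equarterTurn i α c).1 = eqtFun i α c.1 := rfl

theorem eval_qt_inv (i : Axis) (α : ExtCoord L) (c : ECell L) :
    ((equarterTurn i α)⁻¹ c).1 = eqtFunInv i α c.1 := rfl

theorem eqt_sq_apply (i : Axis) (α : ExtCoord L) (c : ECell L) :
    (equarterTurn i α ^ 2) c = equarterTurn i α (equarterTurn i α c) := by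
  rw [sq, Equiv.Perm.mul_apply]

theorem eqt_sq_inv_apply (i : Axis) (α : ExtCoord L) (c : ECell L) :
    (equarterTurn i α ^ 2)⁻¹ c = (equarterTurn i α)⁻¹ ((equarterTurn i α)⁻¹ c) := by
  rw [sq, mul_inv_rev, Equiv.Perm.mul_apply]

theorem equarterTurn_fix {i : Axis} {α : ExtCoord L} {c : ECell L} (h : c.1.1.coord i ≠ α) :
    equarterTurn i α c = c :=
  Subtype.ext (by rw [eval_qt, eqtFun_neg h])

theorem equarterTurn_inv_fix {i : Axis} {α : ExtCoord L} {c : ECell L} (h : c.1.1.coord i ≠ α) :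
    (equarterTurn i α)⁻¹ c = c :=
  Subtype.ext (by rw [eval_qt_inv, eqtFunInv_neg h])

theorem equarterTurn_sq_fix {i : Axis} {α : ExtCoord L} {c : ECell L} (h : c.1.1.coord i ≠ α) :
    (equarterTurn i α ^ 2) c = c := by
  rw [eqt_sq_apply, equarterTurn_fix h, equarterTurn_fix h]

theorem H1_ecell (c : ECell L) : ∃ F : Set (Equiv.Perm (ECell L)), F.Finite ∧
    ∀ π, IsEBasic L π → π c ≠ c → π ∈ F := by
  classical
  refine ⟨⋃ i : Axis, {equarterTurn i (c.1.1.coord i), equarterTurn i (c.1.1.coord i) ^ 2,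
      (equarterTurn i (c.1.1.coord i))⁻¹}, ?_, ?_⟩
  · exact Set.finite_iUnion fun i =>
      (Set.finite_singleton _).insert _ |>.insert _
  · rintro π ⟨i, α, hπ⟩ hmove
    have hα : c.1.1.coord i = α := by
      by_contra hne
      rcases hπ with rfl | rfl | rfl
      · exact hmove (equarterTurn_fix hne)
      · exact hmove (equarterTurn_sq_fix hne)
      · exact hmove (equarterTurn_inv_fix hne)
    subst hα
    refine Set.mem_iUnion.mpr ⟨i, ?_⟩
    rcases hπ with rfl | rfl | rfl <;> simp

def etag (i : Axis) (α : ExtCoord L) : Axis :=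
  if α.isInfB then i else match i with | .x => .y | .y => .x | .z => .x

theorem probe_etag (i : Axis) (α : ExtCoord L) (a : L) :
    ((probe i α a).coord (etag i α)).isInfB = true := by
  cases i <;> cases α <;>
    simp [probe, etag, otherA, otherB, Triple.coord, ExtCoord.isInfB]

theorem H2_ecell [Nonempty L] :
    ∀ π : Equiv.Perm (ECell L), IsEBasic L π → ∃ c, π c ≠ c := by
  rintro π ⟨i, α, hπ⟩
  obtain ⟨a⟩ := ‹Nonempty L›
  refine ⟨⟨(probe i α a, etag i α), probe_etag i α a⟩, ?_⟩
  have h1 : (probe i α a).coord i = α := probe_coord i α a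
  have hr := probe_rot_ne i α a
  rcases hπ with rfl | rfl | rfl
  · intro he
    apply hr.1
    have hv : eqtFun i α (probe i α a, etag i α) = (probe i α a, etag i α) :=
      congrArg Subtype.val he
    rw [eqtFun_pos' h1] at hv
    exact congrArg Prod.fst hv
  · intro he
    apply hr.2
    replace he := (eqt_sq_apply i α _).symm.trans he
    have hv : eqtFun i α (eqtFun i α (probe i α a, etag i α)) = (probe i α a, etag i α) :=
      congrArg Subtype.val he
    rw [eqtFun_pos' h1] at hv
    rw [eqtFun_pos' (show (rot i (probe i α a)).coord i = α by rw [coord_rot_self]; exact h1)]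
      at hv
    exact congrArg Prod.fst hv
  · intro he
    apply hr.1
    have hv : eqtFunInv i α (probe i α a, etag i α) = (probe i α a, etag i α) :=
      congrArg Subtype.val he
    rw [eqtFunInv_pos' h1] at hv
    have hv' : rotInv i (probe i α a) = probe i α a := congrArg Prod.fst hv
    conv_lhs => rw [← hv']
    rw [rot_rotInv]

theorem inV_eqt {p₀ : Triple L} {i : Axis} {α : ExtCoord L} {q : Triple L × Axis}
    (h : inV p₀ q.1) : inV p₀ (eqtFun i α q).1 := by
  by_cases hc : q.1.coord i = α
  · rw [eqtFun_pos hc]; exact inV_rot i h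
  · rw [eqtFun_neg hc]; exact h

theorem inV_eqtInv {p₀ : Triple L} {i : Axis} {α : ExtCoord L} {q : Triple L × Axis}
    (h : inV p₀ q.1) : inV p₀ (eqtFunInv i α q).1 := by
  by_cases hc : q.1.coord i = α
  · rw [eqtFunInv_pos hc]; exact inV_rotInv i h
  · rw [eqtFunInv_neg hc]; exact h

theorem H3_ecell (c : ECell L) : ∃ S : Set (ECell L), S.Finite ∧ c ∈ S ∧
    ∀ π, IsEBasic L π → ∀ d ∈ S, π d ∈ S ∧ π⁻¹ d ∈ S := by
  refine ⟨{d : ECell L | inV c.1.1 d.1.1}, ?_, inV_self c.1.1, ?_⟩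
  · have h : {d : ECell L | inV c.1.1 d.1.1}
        = Subtype.val ⁻¹' ({p : Triple L | inV c.1.1 p} ×ˢ (Set.univ : Set Axis)) := by
      ext d
      simp [Set.mem_prod]
      exact ⟨fun h => ⟨h, Set.mem_univ _⟩, fun h => h.1⟩
    rw [h]
    exact ((inV_set_finite c.1.1).prod (Set.finite_univ)).preimage
      (Subtype.val_injective.injOn)
  · rintro π ⟨i, α, rfl | rfl | rfl⟩ d hd
    · refine ⟨?_, ?_⟩
      · show inV c.1.1 (equarterTurn i α d).1.1
        rw [eval_qt]; exact inV_eqt hd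
      · show inV c.1.1 ((equarterTurn i α)⁻¹ d).1.1
        rw [eval_qt_inv]; exact inV_eqtInv hd
    · refine ⟨?_, ?_⟩
      · show inV c.1.1 ((equarterTurn i α ^ 2) d).1.1
        rw [eqt_sq_apply, eval_qt, eval_qt]; exact inV_eqt (inV_eqt hd)
      · show inV c.1.1 ((equarterTurn i α ^ 2)⁻¹ d).1.1
        rw [eqt_sq_inv_apply, eval_qt_inv, eval_qt_inv]; exact inV_eqtInv (inV_eqtInv hd)
    · refine ⟨?_, ?_⟩
      · show inV c.1.1 ((equarterTurn i α)⁻¹ d).1.1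
        rw [eval_qt_inv]; exact inV_eqtInv hd
      · show inV c.1.1 ((equarterTurn i α)⁻¹⁻¹ d).1.1
        rw [inv_inv, eval_qt]; exact inV_eqt hd

end EdgedInstances

end InfRubik
open InfRubik in
/-- A basic sequence is universally convergent iff it is twist-finite, on the edgeless
cube as well as on the edged cube. -/
theorem univConv_iff_twistFinite {L : Type u} [Infinite L] :
    (∀ s : BasicSeq L, s.UnivConv ↔ s.TwistFinite) ∧
    (∀ s : EBasicSeq L, s.UnivConv ↔ s.TwistFinite) := by
  have : Nonempty L := inferInstance
  exact ⟨fun s => generic_iff H1_cell H2_cell H3_cell s,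
    fun s => generic_iff H1_ecell H2_ecell H3_ecell s⟩
end

section
/- The universally convergent basic sequences on the edgeless cube Q_L are closed under ∼: if σ⃗ is a universally convergent basic sequence and τ⃗ is any basic sequence with τ⃗ ∼ σ⃗, then τ⃗ is universally convergent. -/
universe u v

namespace InfRubik

/-! ### Auxiliary material for the closure theorem -/

namespace Aux

variable {L : Type u}

/-- Forget the sign of a coordinate. -/
def unsign : ExtCoord L → ExtCoord L
  | .neg r => .pos r
  | .zero => .zero
  | .pos r => .pos r
  | .negInf => .posInf
  | .posInf => .posInf

@[simp] theorem unsign_reflect (a : ExtCoord L) : unsign a.reflect = unsign a := by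
  cases a <;> rfl

/-- The multiset of unsigned coordinates of a point; invariant under all twists. -/
def key (p : Triple L) : Multiset (ExtCoord L) :=
  unsign p.1 ::ₘ unsign p.2.1 ::ₘ {unsign p.2.2}

theorem tswap {α : Type w} (a b : α) : (a ::ₘ {b} : Multiset α) = b ::ₘ {a} := by
  show (a ::ₘ b ::ₘ 0 : Multiset α) = b ::ₘ a ::ₘ 0
  exact Multiset.cons_swap a b 0

theorem key_rot (i : Axis) (p : Triple L) : key (rot i p) = key p := by
  cases i <;> simp only [key, rot, unsign_reflect]
  · rw [tswap]
  · rw [tswap, Multiset.cons_swap, tswap]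
  · rw [Multiset.cons_swap]

/-- A permutation of cells preserving the `key` invariant. -/
def KP (π : Equiv.Perm (Cell L)) : Prop := ∀ c : Cell L, key (π c).1 = key c.1

theorem KP.inv {π : Equiv.Perm (Cell L)} (h : KP π) : KP π⁻¹ := by
  intro c
  have h2 := h (π⁻¹ c)
  rw [show π (π⁻¹ c) = c from π.apply_symm_apply c] at h2
  exact h2.symm

theorem KP.mul {π π' : Equiv.Perm (Cell L)} (h : KP π) (h' : KP π') : KP (π * π') := by
  intro c
  have : (π * π') c = π (π' c) := rfl
  rw [this]
  exact (h (π' c)).trans (h' c)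

theorem kp_quarterTurn (i : Axis) (α : ExtCoord L) : KP (quarterTurn i α) := by
  intro c
  show key (qtTriple i α c.1) = key c.1
  unfold qtTriple
  split
  · exact key_rot i c.1
  · rfl

theorem kp_of_isBasic {π : Equiv.Perm (Cell L)} (h : IsBasic L π) : KP π := by
  obtain ⟨i, α, h | h | h⟩ := h <;> subst h
  · exact kp_quarterTurn i α
  · rw [pow_two]
    exact (kp_quarterTurn i α).mul (kp_quarterTurn i α)
  · exact (kp_quarterTurn i α).inv

open Classical in
/-- The indicator coloring of a cell. -/
noncomputable def ind (w d : Cell L) : Color :=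
  if d = w then Color.red else Color.white

theorem ind_eq {w d' : Cell L} (h : ind w w = ind w d') : d' = w := by
  unfold ind at h
  rw [if_pos rfl] at h
  by_contra hne
  rw [if_neg hne] at h
  exact absurd h (by decide)

/-! #### `eventualVal` lemmas -/

theorem eventualVal_eq_some {X : Type u} {lam : Ordinal.{v}} {g : ∀ η, η < lam → Option X}
    {v : X} {γ : Ordinal.{v}} (hγ : γ < lam)
    (hst : ∀ η (hη : η < lam), γ ≤ η → g η hη = some v) :
    eventualVal lam g = some v := by
  have hex : ∃ w : X, ∃ γ', γ' < lam ∧ ∀ η (hη : η < lam), γ' ≤ η → g η hη = some w :=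
    ⟨v, γ, hγ, hst⟩
  rw [eventualVal, dif_pos hex]
  obtain ⟨γ', hγ', hst'⟩ := hex.choose_spec
  have hm : max γ γ' < lam := max_lt hγ hγ'
  have h1 := hst _ hm (le_max_left _ _)
  have h2 := hst' _ hm (le_max_right _ _)
  rw [h1] at h2
  exact h2.symm

theorem eventualVal_eq_none {X : Type u} {lam : Ordinal.{v}} {g : ∀ η, η < lam → Option X}
    (h : ¬ ∃ v : X, ∃ γ, γ < lam ∧ ∀ η (hη : η < lam), γ ≤ η → g η hη = some v) :
    eventualVal lam g = none := by
  rw [eventualVal, dif_neg h]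

theorem stab_of_eventualVal_eq_some {X : Type u} {lam : Ordinal.{v}}
    {g : ∀ η, η < lam → Option X} {v : X} (h : eventualVal lam g = some v) :
    ∃ γ, γ < lam ∧ ∀ η (hη : η < lam), γ ≤ η → g η hη = some v := by
  rw [eventualVal] at h
  split at h
  · next hex =>
    obtain ⟨γ, hγ, hst⟩ := hex.choose_spec
    injection h with h
    exact ⟨γ, hγ, fun η hη hle => by rw [hst η hη hle, h]⟩
  · exact absurd h (by simp)

/-! #### `run` unfolding lemmas -/

theorem run_zero {Cl : Type v} {X : Type u} (σ : Ordinal.{v} → Equiv.Perm Cl)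
    (f0 : Cl → Option X) : run σ f0 0 = f0 :=
  Ordinal.limitRecOn_zero _ _ _

theorem run_succ {Cl : Type v} {X : Type u} (σ : Ordinal.{v} → Equiv.Perm Cl)
    (f0 : Cl → Option X) (o : Ordinal.{v}) :
    run σ f0 (o + 1) = fun c => run σ f0 o ((σ o)⁻¹ c) :=
  Ordinal.limitRecOn_add_one _ _ _ _

theorem run_limit {Cl : Type v} {X : Type u} (σ : Ordinal.{v} → Equiv.Perm Cl)
    (f0 : Cl → Option X) {lam : Ordinal.{v}} (h : Order.IsSuccLimit lam) (c : Cl) :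
    run σ f0 lam c = eventualVal lam (fun η (_ : η < lam) => run σ f0 η c) :=
  congrFun (Ordinal.limitRecOn_limit (motive := fun _ => Cl → Option X) _ _ _ _ h) c

/-- If the run over the identity labelling stabilizes to `d`, then the run over any `f0`
yields `f0 d`. -/
theorem run_eq_of_run_id {Cl : Type v} {X : Type u} (σ : Ordinal.{v} → Equiv.Perm Cl)
    (f0 : Cl → Option X) :
    ∀ θ (c : Cl) (d : Cl), run σ (fun c => some c) θ c = some d → run σ f0 θ c = f0 d := by
  intro θ
  induction θ using Ordinal.limitRecOn with
  | zero =>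
    intro c d h
    rw [run_zero] at h
    rw [run_zero]
    injection h with h
    rw [h]
  | add_one o ih =>
    intro c d h
    rw [run_succ] at h
    rw [run_succ]
    exact ih _ _ h
  | limit o ho ih =>
    intro c d h
    rw [run_limit _ _ ho _] at h
    rw [run_limit _ _ ho _]
    obtain ⟨γ, hγ, hst⟩ := stab_of_eventualVal_eq_some h
    have hfd : ∀ η (hη : η < o), γ ≤ η → run σ f0 η c = f0 d :=
      fun η hη hle => ih η hη _ _ (hst η hη hle)
    cases hv : f0 d with
    | some v => exact eventualVal_eq_some hγ (fun η hη hle => by rw [hfd η hη hle, hv])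
    | none =>
      apply eventualVal_eq_none
      rintro ⟨w, γ', hγ', hst'⟩
      have hm : max γ γ' < o := max_lt hγ hγ'
      have h1 := hfd _ hm (le_max_left _ _)
      have h2 := hst' _ hm (le_max_right _ _)
      rw [h1, hv] at h2
      exact (Option.some_ne_none w) h2.symm

/-- The values of the run over the identity labelling stay in the same `key`-fiber. -/
theorem run_id_key (σ : Ordinal.{u} → Equiv.Perm (Cell L)) (len : Ordinal.{u})
    (hσ : ∀ η, η < len → KP (σ η)) :
    ∀ θ, θ ≤ len → ∀ (c d : Cell L),
      run σ (fun c => some c) θ c = some d → key d.1 = key c.1 := by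
  intro θ
  induction θ using Ordinal.limitRecOn with
  | zero =>
    intro _ c d h
    rw [run_zero] at h
    injection h with h
    rw [h]
  | add_one o ih =>
    intro hle c d h
    rw [run_succ] at h
    have ho : o < len := lt_of_lt_of_le (lt_add_one o) hle
    exact (ih (le_of_lt ho) _ _ h).trans ((hσ o ho).inv c)
  | limit o ho ih =>
    intro hle c d h
    rw [run_limit _ _ ho _] at h
    obtain ⟨γ, hγ, hst⟩ := stab_of_eventualVal_eq_some h
    exact ih γ hγ (le_of_lt (lt_of_lt_of_le hγ hle)) c d (hst γ hγ le_rfl)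

/-- The run commutes with postcomposition by a map `F` that kills `none` and is injective
on the relevant `key`-fiber. -/
theorem run_comm_F (σ : Ordinal.{u} → Equiv.Perm (Cell L)) (len : Ordinal.{u})
    (hσ : ∀ η, η < len → KP (σ η)) (k0 : Multiset (ExtCoord L)) {Y : Type w}
    (F : Option (Cell L) → Option Y) (hFn : F none = none)
    (hFi : ∀ d d' : Cell L, key d.1 = k0 → key d'.1 = k0 → F (some d) = F (some d') → d = d') :
    ∀ θ, θ ≤ len → ∀ c : Cell L, key c.1 = k0 →
      run σ (fun d => F (some d)) θ c = F (run σ (fun c => some c) θ c) := by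
  intro θ
  induction θ using Ordinal.limitRecOn with
  | zero =>
    intro _ c _
    rw [run_zero, run_zero]
  | add_one o ih =>
    intro hle c hc
    rw [run_succ, run_succ]
    have ho : o < len := lt_of_lt_of_le (lt_add_one o) hle
    exact ih (le_of_lt ho) _ (((hσ o ho).inv c).trans hc)
  | limit o ho ih =>
    intro hle c hc
    rw [run_limit _ _ ho c, run_limit _ _ ho c]
    have hkey : ∀ η, η < o → ∀ d : Cell L,
        run σ (fun c => some c) η c = some d → key d.1 = k0 :=
      fun η hη d h =>
        (run_id_key σ len hσ η (le_of_lt (lt_of_lt_of_le hη hle)) c d h).trans hc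
    have hIH : ∀ η, η < o →
        run σ (fun d => F (some d)) η c = F (run σ (fun c => some c) η c) :=
      fun η hη => ih η hη (le_of_lt (lt_of_lt_of_le hη hle)) c hc
    by_cases hstab : ∃ v : Cell L, ∃ γ, γ < o ∧ ∀ η (hη : η < o), γ ≤ η →
        run σ (fun c => some c) η c = some v
    · obtain ⟨v, γ, hγ, hst⟩ := hstab
      rw [eventualVal_eq_some hγ (fun η hη hle' => hst η hη hle')]
      have hL : ∀ η, η < o → γ ≤ η → run σ (fun d => F (some d)) η c = F (some v) :=
        fun η hη hle' => by rw [hIH η hη, hst η hη hle']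
      cases hv : F (some v) with
      | some w => exact eventualVal_eq_some hγ (fun η hη hle' => by rw [hL η hη hle', hv])
      | none =>
        apply eventualVal_eq_none
        rintro ⟨w, γ', hγ', hst'⟩
        have hm : max γ γ' < o := max_lt hγ hγ'
        have h1 := hL _ hm (le_max_left _ _)
        have h2 := hst' _ hm (le_max_right _ _)
        rw [h1, hv] at h2
        exact (Option.some_ne_none w) h2.symm
    · rw [eventualVal_eq_none hstab, hFn]
      apply eventualVal_eq_none
      rintro ⟨w, γ, hγ, hst⟩
      have hsome : ∀ η (hη : η < o), γ ≤ η → ∃ d : Cell L,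
          run σ (fun c => some c) η c = some d := by
        intro η hη hle'
        cases hid : run σ (fun c => some c) η c with
        | some d => exact ⟨d, rfl⟩
        | none =>
          exfalso
          have h1 := hst η hη hle'
          rw [hIH η hη, hid, hFn] at h1
          exact (Option.some_ne_none w) h1.symm
      obtain ⟨d, hd⟩ := hsome γ hγ le_rfl
      apply hstab
      refine ⟨d, γ, hγ, fun η hη hle' => ?_⟩
      obtain ⟨d', hd'⟩ := hsome η hη hle'
      have h1 := hst η hη hle'
      have h2 := hst γ hγ le_rfl
      rw [hIH η hη, hd'] at h1
      rw [hIH γ hγ, hd] at h2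
      rw [hd', hFi d' d (hkey η hη d' hd') (hkey γ hγ d hd) (h1.trans h2.symm)]

/-! #### Finite products of labellings -/

open Classical in
/-- Combine a finite family of option values into an option of a function. -/
noncomputable def zp {I : Type w} {X : Type x} (o : I → Option X) : Option (I → X) :=
  if h : ∀ i, (o i).isSome = true then some (fun i => (o i).get (h i)) else none

theorem zp_some {I : Type w} {X : Type x} (h : I → X) :
    zp (fun i => some (h i)) = some h := by
  have hall : ∀ i : I, (some (h i)).isSome = true := fun i => rfl
  rw [zp, dif_pos hall]
  rfl

theorem zp_none {I : Type w} {X : Type x} {o : I → Option X} (i : I) (h : o i = none) :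
    zp o = none := by
  rw [zp, dif_neg]
  intro hall
  have := hall i
  rw [h] at this
  simp at this

theorem zp_eq_some {I : Type w} {X : Type x} {o : I → Option X} {w : I → X}
    (h : zp o = some w) (i : I) : o i = some (w i) := by
  rw [zp] at h
  split at h
  · injection h with h
    subst h
    exact (Option.some_get _).symm
  · exact absurd h (by simp)

/-- The run of a finite product labelling is the product of the runs. -/
theorem run_zp {Cl : Type v} {I : Type w} [Fintype I] {X : Type x}
    (σ : Ordinal.{v} → Equiv.Perm Cl) (f : I → Cl → Option X) :
    ∀ θ (c : Cl),
      run σ (fun c => zp (fun i => f i c)) θ c = zp (fun i => run σ (f i) θ c) := by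
  intro θ
  induction θ using Ordinal.limitRecOn with
  | zero =>
    intro c
    rw [run_zero]
    congr 1
    funext i
    rw [run_zero]
  | add_one o ih =>
    intro c
    rw [run_succ]
    have : (fun i => run σ (f i) (o + 1) c) = fun i => run σ (f i) o ((σ o)⁻¹ c) := by
      funext i; rw [run_succ]
    rw [this]
    exact ih _
  | limit o ho ih =>
    intro c
    rw [run_limit _ _ ho _]
    have hcomp : (fun i => run σ (f i) o c)
        = fun i => eventualVal o (fun η (_ : η < o) => run σ (f i) η c) := by
      funext i; rw [run_limit _ _ ho _]
    rw [hcomp]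
    by_cases hall : ∀ i, ∃ v : X, ∃ γ, γ < o ∧ ∀ η (hη : η < o), γ ≤ η →
        run σ (f i) η c = some v
    · choose v γ hγ hst using hall
      have hγs : Finset.univ.sup γ < o :=
        (Finset.sup_lt_iff (by simpa using ho.pos)).mpr (fun i _ => hγ i)
      have hL : eventualVal o (fun η (_ : η < o) =>
          run σ (fun c => zp (fun i => f i c)) η c) = some v := by
        apply eventualVal_eq_some hγs
        intro η hη hle
        rw [ih η hη c]
        have : (fun i => run σ (f i) η c) = fun i => some (v i) := by
          funext i
          exact hst i η hη (le_trans (Finset.le_sup (Finset.mem_univ i)) hle)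
        rw [this]
        exact zp_some v
      rw [hL]
      have : (fun i => eventualVal o (fun η (_ : η < o) => run σ (f i) η c))
          = fun i => some (v i) := by
        funext i
        exact eventualVal_eq_some (hγ i) (hst i)
      rw [this]
      exact (zp_some v).symm
    · obtain ⟨i0, hi0⟩ := not_forall.mp hall
      rw [zp_none i0 (eventualVal_eq_none hi0)]
      apply eventualVal_eq_none
      rintro ⟨w, γ, hγ, hst⟩
      apply hi0
      refine ⟨w i0, γ, hγ, fun η hη hle => ?_⟩
      have h1 := hst η hη hle
      rw [ih η hη c] at h1
      exact zp_eq_some h1 i0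

/-! #### Finiteness of the key fiber -/

theorem unsign_cases (a : ExtCoord L) : a = unsign a ∨ a = (unsign a).reflect := by
  cases a <;> simp [unsign, ExtCoord.reflect]

theorem keyFiber_finite (k0 : Multiset (ExtCoord L)) :
    {d : Cell L | key d.1 = k0}.Finite := by
  have hA : {a : ExtCoord L | unsign a ∈ k0}.Finite := by
    apply Set.Finite.subset (Set.Finite.biUnion (Multiset.finite_toSet k0)
      (fun u _ => (Set.finite_singleton (ExtCoord.reflect u)).insert u))
    intro a ha
    have hm : unsign a ∈ {x : ExtCoord L | x ∈ k0} := ha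
    have hmem : a ∈ ({unsign a, (unsign a).reflect} : Set (ExtCoord L)) := by
      rcases unsign_cases a with h | h
      · exact Set.mem_insert_iff.mpr (Or.inl h)
      · exact Set.mem_insert_iff.mpr (Or.inr (Set.mem_singleton_iff.mpr h))
    exact Set.mem_biUnion hm hmem
  have hprod : ({p : Triple L | unsign p.1 ∈ k0 ∧ unsign p.2.1 ∈ k0 ∧ unsign p.2.2 ∈ k0}).Finite := by
    have := (hA.prod (hA.prod hA))
    apply Set.Finite.subset this
    rintro ⟨a, b, c⟩ ⟨h1, h2, h3⟩
    exact ⟨h1, h2, h3⟩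
  have hsub : {d : Cell L | key d.1 = k0} ⊆ Subtype.val ⁻¹'
      {p : Triple L | unsign p.1 ∈ k0 ∧ unsign p.2.1 ∈ k0 ∧ unsign p.2.2 ∈ k0} := by
    intro d hd
    have h1 : unsign d.1.1 ∈ key d.1 := Multiset.mem_cons_self _ _
    have h2 : unsign d.1.2.1 ∈ key d.1 :=
      Multiset.mem_cons_of_mem (Multiset.mem_cons_self _ _)
    have h3 : unsign d.1.2.2 ∈ key d.1 :=
      Multiset.mem_cons_of_mem (Multiset.mem_cons_of_mem (Multiset.mem_singleton_self _))
    rw [hd] at h1 h2 h3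
    exact ⟨h1, h2, h3⟩
  exact Set.Finite.subset
    (Set.Finite.preimage (fun x _ y _ h => Subtype.val_injective h) hprod) hsub

end Aux

end InfRubik
open InfRubik in
/-- The universally convergent basic sequences on the edgeless cube are closed under the
equivalence `∼`. -/
theorem univConv_closed_under_sim {L : Type u} [Infinite L] (s t : BasicSeq L)
    (hs : s.UnivConv) (hst : t.Sim s) : t.UnivConv := by
  classical
  intro c0 hnone
  obtain ⟨e, he⟩ := Option.ne_none_iff_exists'.mp (hs c0)
  have he' : run s.seq (fun c : Cell L => some c) s.len c0 = some e := he
  let V : Set (Cell L) := {d : Cell L | Aux.key d.1 = Aux.key c0.1}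
  have hVfin : V.Finite := Aux.keyFiber_finite _
  haveI : Fintype ↥V := hVfin.fintype
  let F : Option (Cell L) → Option (↥V → Color) :=
    Option.map (fun (d : Cell L) (v : ↥V) => Aux.ind ↑v d)
  have hFn : F none = none := rfl
  have hFi : ∀ d d' : Cell L, Aux.key d.1 = Aux.key c0.1 → Aux.key d'.1 = Aux.key c0.1 →
      F (some d) = F (some d') → d = d' := by
    intro d d' hd hd' h
    have h2 : (fun v : ↥V => Aux.ind ↑v d) = fun v : ↥V => Aux.ind ↑v d' :=
      Option.some_injective _ h
    have hdd := congrFun h2 (⟨d, hd⟩ : ↥V)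
    exact (Aux.ind_eq hdd).symm
  have hkpt : ∀ η, η < t.len → Aux.KP (t.seq η) :=
    fun η hη => Aux.kp_of_isBasic (t.basic η hη)
  have hC := Aux.run_comm_F t.seq t.len hkpt (Aux.key c0.1) F hFn hFi t.len le_rfl c0 rfl
  have hnone' : run t.seq (fun c : Cell L => some c) t.len c0 = none := hnone
  rw [hnone', hFn] at hC
  have hPi := Aux.run_zp t.seq (fun (v : ↥V) (d : Cell L) => some (Aux.ind ↑v d)) t.len c0
  have hlab : (fun c : Cell L => Aux.zp (fun v : ↥V => some (Aux.ind ↑v c)))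
      = fun d : Cell L => F (some d) := by
    funext d
    rw [Aux.zp_some]
    rfl
  rw [hlab, hC] at hPi
  have hcomp : ∀ v : ↥V,
      run t.seq (fun d : Cell L => some (Aux.ind ↑v d)) t.len c0 = some (Aux.ind ↑v e) := by
    intro v
    have h1 : t.terminal (fun d : Cell L => some (Aux.ind ↑v d))
        = s.terminal (fun d : Cell L => some (Aux.ind ↑v d)) := hst _
    have h2 : run s.seq (fun d : Cell L => some (Aux.ind ↑v d)) s.len c0
        = some (Aux.ind ↑v e) :=
      Aux.run_eq_of_run_id s.seq (fun d : Cell L => some (Aux.ind ↑v d)) s.len c0 e he'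
    calc run t.seq (fun d : Cell L => some (Aux.ind ↑v d)) t.len c0
        = t.terminal (fun d : Cell L => some (Aux.ind ↑v d)) c0 := rfl
      _ = some (Aux.ind ↑v e) := by rw [h1]; exact h2
  rw [show (fun v : ↥V => run t.seq (fun d : Cell L => some (Aux.ind ↑v d)) t.len c0)
      = fun v : ↥V => some (Aux.ind ↑v e) from funext hcomp, Aux.zp_some] at hPi
  exact absurd hPi.symm (Option.some_ne_none _)
end
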